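/- arXiv:0801.3980 — 3 statements merged into one kernel-verified Lean document; each statement's English description precedes it below -/
import Mathlib

section
/- In the category of finite nonempty linearly ordered sets (the simplex category Δ), inverting all 'first vertex' maps [0] → [k] and all 'last vertex' maps [0] → [k] inverts every morphism: in the localization of Δ at the first- and last-vertex maps, every morphism becomes an isomorphism. -/
open CategoryTheory

/-- The class of "first vertex" and "last vertex" maps `[0] → [k]` in the simplex
category: morphisms whose source is `[0]` and which hit either the first or the
last vertex. -/
def FirstLastVertex : MorphismProperty SimplexCategory := fun a b f =>
  a.len = 0 ∧ ((∀ i, f.toOrderHom i = 0) ∨ (∀ i, f.toOrderHom i = Fin.last b.len))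

lemma firstVertex_mem (b : SimplexCategory) :
    FirstLastVertex (SimplexCategory.const (SimplexCategory.mk 0) b 0) :=
  ⟨rfl, Or.inl fun _ => rfl⟩

lemma lastVertex_mem (b : SimplexCategory) :
    FirstLastVertex (SimplexCategory.const (SimplexCategory.mk 0) b (Fin.last b.len)) :=
  ⟨rfl, Or.inr fun _ => rfl⟩

lemma isIso_of_source_zero {b : SimplexCategory} (g : SimplexCategory.mk 0 ⟶ b) :
    IsIso (FirstLastVertex.Q.map g) := by
  set j : Fin (b.len + 1) := g.toOrderHom 0 with hj
  -- h : [j] ⟶ b, the inclusion of the first j+1 vertices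
  let h : SimplexCategory.mk j.1 ⟶ b :=
    SimplexCategory.Hom.mk ⟨fun i => Fin.castLE j.isLt i, fun _ _ hle => hle⟩
  have hfact : g = SimplexCategory.const (SimplexCategory.mk 0)
      (SimplexCategory.mk j.1) (Fin.last j.1) ≫ h := by
    ext i : 3
    obtain rfl : i = 0 := Subsingleton.elim (α := Fin 1) i 0
    rfl
  have hcomp : SimplexCategory.const (SimplexCategory.mk 0)
      (SimplexCategory.mk j.1) 0 ≫ h = SimplexCategory.const (SimplexCategory.mk 0) b 0 := by
    ext i : 3
    rfl
  have h1 : IsIso (FirstLastVertex.Q.map (SimplexCategory.const (SimplexCategory.mk 0)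
      (SimplexCategory.mk j.1) (Fin.last j.1))) :=
    FirstLastVertex.Q_inverts _ (lastVertex_mem _)
  have h2 : IsIso (FirstLastVertex.Q.map (SimplexCategory.const (SimplexCategory.mk 0)
      (SimplexCategory.mk j.1) 0)) :=
    FirstLastVertex.Q_inverts _ (firstVertex_mem _)
  have h3 : IsIso (FirstLastVertex.Q.map (SimplexCategory.const (SimplexCategory.mk 0) b 0)) :=
    FirstLastVertex.Q_inverts _ (firstVertex_mem _)
  have hh : IsIso (FirstLastVertex.Q.map h) := by
    rw [← hcomp, Functor.map_comp] at h3
    exact IsIso.of_isIso_comp_left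
      (FirstLastVertex.Q.map (SimplexCategory.const (SimplexCategory.mk 0)
        (SimplexCategory.mk j.1) 0)) _
  rw [hfact, Functor.map_comp]
  infer_instance

/-- in the localization of the simplex category `Δ` at the first- and
last-vertex maps, every morphism becomes an isomorphism. -/
theorem simplexCategory_localization_groupoid
    {a b : SimplexCategory} (f : a ⟶ b) :
    IsIso (FirstLastVertex.Q.map f) := by
  have h1 : IsIso (FirstLastVertex.Q.map (SimplexCategory.const (SimplexCategory.mk 0) a 0)) :=
    FirstLastVertex.Q_inverts _ (firstVertex_mem _)
  have h2 : IsIso (FirstLastVertex.Q.map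
      (SimplexCategory.const (SimplexCategory.mk 0) a 0 ≫ f)) :=
    isIso_of_source_zero _
  rw [Functor.map_comp] at h2
  exact IsIso.of_isIso_comp_left
    (FirstLastVertex.Q.map (SimplexCategory.const (SimplexCategory.mk 0) a 0)) _
end

section
/- Let X' ⊆ X be a union of connected components of X and let p : X → Y be a quasifibration of topological spaces. Then the restriction p|_{X'} : X' → Y is a quasifibration, where a quasifibration is a map such that for every point of Y the canonical map from the fiber to the homotopy fiber is a weak homotopy equivalence. -/
open Metric unitInterval

noncomputable section

/-- The unit sphere `S^j` in `ℝ^{j+1}`. -/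
abbrev USphere (j : ℕ) : Type := (sphere (0 : EuclideanSpace ℝ (Fin (j+1))) 1 : Set _)

/-- The unit disk `D^{j+1}` in `ℝ^{j+1}`. -/
abbrev UDisk (j : ℕ) : Type := (closedBall (0 : EuclideanSpace ℝ (Fin (j+1))) 1 : Set _)

/-- Every map `S^j → Z` extends over `D^{j+1}`. -/
def SphereMapExtends (j : ℕ) (Z : Type*) [TopologicalSpace Z] : Prop :=
  ∀ φ : C(USphere j, Z), ∃ ψ : C(UDisk j, Z),
    ∀ x : USphere j, ψ ⟨x.1, sphere_subset_closedBall x.2⟩ = φ x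

/-- A space `Z` is `m`-connected: every map `S^j → Z` for `-1 ≤ j ≤ m` extends over
`D^{j+1}`.  (The case `j = -1` says that `Z` is nonempty.) -/
def SpaceConn (m : ℤ) (Z : Type*) [TopologicalSpace Z] : Prop :=
  ((-1 : ℤ) ≤ m → Nonempty Z) ∧ ∀ j : ℕ, (j : ℤ) ≤ m → SphereMapExtends j Z

/-- The homotopy fiber of `f` over `y`: pairs `(x, γ)` with `γ` a path from `f x` to `y`. -/
abbrev HoFiber {X Y : Type*} [TopologicalSpace X] [TopologicalSpace Y]
    (f : C(X, Y)) (y : Y) : Type _ :=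
  { p : X × C(I, Y) // p.2 0 = f p.1 ∧ p.2 1 = y }

/-- A map is `k`-connected if each of its homotopy fibers is `(k-1)`-connected. -/
def ConnMap (k : ℤ) {X Y : Type*} [TopologicalSpace X] [TopologicalSpace Y]
    (f : C(X, Y)) : Prop :=
  ∀ y : Y, SpaceConn (k - 1) (HoFiber f y)

end

noncomputable section

/-- A basepoint on the sphere `S^n`. -/
def SpherePt (n : ℕ) : USphere n :=
  ⟨EuclideanSpace.single 0 1, by simp [EuclideanSpace.norm_single]⟩

/-- Based maps `(S^n, pt) → (X, x)`. -/
def BasedMap (n : ℕ) (X : Type*) [TopologicalSpace X] (x : X) : Type _ :=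
  { φ : C(USphere n, X) // φ (SpherePt n) = x }

/-- Based homotopy (homotopy relative to the basepoint). -/
def basedSetoid (n : ℕ) (X : Type*) [TopologicalSpace X] (x : X) :
    Setoid (BasedMap n X x) where
  r φ ψ := φ.1.HomotopicRel ψ.1 {SpherePt n}
  iseqv := ⟨fun φ => ContinuousMap.HomotopicRel.refl _,
    fun h => h.symm, fun h h' => h.trans h'⟩

/-- The `n`-th homotopy set of `(X, x)`: based maps from `S^n` modulo based homotopy. -/
def PiSet (n : ℕ) (X : Type*) [TopologicalSpace X] (x : X) : Type _ :=
  Quotient (basedSetoid n X x)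

/-- The induced map on homotopy sets. -/
def PiMap (n : ℕ) {X Y : Type*} [TopologicalSpace X] [TopologicalSpace Y]
    (f : C(X, Y)) (x : X) : PiSet n X x → PiSet n Y (f x) :=
  Quotient.map (fun φ => ⟨f.comp φ.1, by simp [φ.2]⟩)
    (fun φ ψ h => h.elim fun F => ⟨F.compContinuousMap f⟩)

/-- The induced map on path components. -/
def Pi0Map {X Y : Type*} [TopologicalSpace X] [TopologicalSpace Y] (f : C(X, Y)) :
    ZerothHomotopy X → ZerothHomotopy Y :=
  Quotient.map f (fun _ _ h => h.elim fun p => ⟨p.map f.continuous⟩)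

/-- A weak homotopy equivalence: a map inducing a bijection on path components and
bijections (hence isomorphisms) on all homotopy groups at all basepoints. -/
def WeakHomotopyEquiv {X Y : Type*} [TopologicalSpace X] [TopologicalSpace Y]
    (f : C(X, Y)) : Prop :=
  Function.Bijective (Pi0Map f) ∧
    ∀ n : ℕ, 1 ≤ n → ∀ x : X, Function.Bijective (PiMap n f x)

end

noncomputable section

/-- The (strict) fiber of `f` over `y`. -/
abbrev StrictFiber {X Y : Type*} [TopologicalSpace X] [TopologicalSpace Y]
    (f : C(X, Y)) (y : Y) : Type _ := { x : X // f x = y }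

/-- The canonical map from the fiber to the homotopy fiber (using the constant path). -/
def fiberToHoFiber {X Y : Type*} [TopologicalSpace X] [TopologicalSpace Y]
    (f : C(X, Y)) (y : Y) : C(StrictFiber f y, HoFiber f y) where
  toFun x := ⟨(x.1, ContinuousMap.const I y), x.2.symm, rfl⟩
  continuous_toFun := by
    apply Continuous.subtype_mk
    exact (continuous_subtype_val.prodMk continuous_const)

/-- A quasifibration: for every point of the base, the canonical map from the fiber
to the homotopy fiber is a weak homotopy equivalence. -/
def IsQuasifibration {X Y : Type*} [TopologicalSpace X] [TopologicalSpace Y]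
    (p : C(X, Y)) : Prop :=
  ∀ y : Y, WeakHomotopyEquiv (fiberToHoFiber p y)

end

noncomputable section AuxQF
open Metric unitInterval

variable {A B : Type*} [TopologicalSpace A] [TopologicalSpace B]

lemma mem_of_mem_clopen {K : Type} [TopologicalSpace K] [PreconnectedSpace K]
    (g : C(K, B)) {S : Set B} (hS : IsClopen S) {k0 : K} (h : g k0 ∈ S) (k : K) : g k ∈ S := by
  have hc : IsClopen (g ⁻¹' S) := hS.preimage g.continuous
  have h2 := hc.eq_univ ⟨k0, h⟩
  have : k ∈ g ⁻¹' S := h2 ▸ Set.mem_univ k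
  exact this

lemma usphere_connectedSpace {n : ℕ} (hn : 1 ≤ n) : ConnectedSpace (USphere n) := by
  refine Subtype.connectedSpace (isConnected_sphere ?_ _ zero_le_one)
  rw [← Module.finrank_eq_rank, finrank_euclideanSpace_fin]
  exact_mod_cast Nat.lt_of_lt_of_le Nat.one_lt_two (by omega)

/-- `j` lifts maps from (pre)connected spaces given a single lifted point. -/
def LiftsAll (j : C(A, B)) : Prop :=
  ∀ (K : Type) (_ : TopologicalSpace K) (_ : PreconnectedSpace K)
    (g : C(K, B)) (k0 : K) (a0 : A), g k0 = j a0 → ∃ g' : C(K, A), ∀ k, j (g' k) = g k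

lemma joined_lift {j : C(A, B)} (hj : Function.Injective j) (hl : LiftsAll j)
    {a b : A} (h : Joined (j a) (j b)) : Joined a b := by
  obtain ⟨γ⟩ := h
  obtain ⟨g', hg'⟩ := hl I inferInstance inferInstance γ.toContinuousMap 0 a (by simp)
  have h0 : j (g' 0) = j a := by rw [hg' 0]; simp
  have h1 : j (g' 1) = j b := by rw [hg' 1]; simp
  exact ⟨⟨g', hj h0, hj h1⟩⟩

lemma piMap_bij_of_liftsAll {j : C(A, B)} (hj : Function.Injective j) (hl : LiftsAll j)
    {n : ℕ} (hn : 1 ≤ n) (a : A) : Function.Bijective (PiMap n j a) := by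
  haveI : ConnectedSpace (USphere n) := usphere_connectedSpace hn
  constructor
  · intro c d hcd
    induction c using Quotient.ind with | _ φ => ?_
    induction d using Quotient.ind with | _ ψ => ?_
    obtain ⟨F⟩ := Quotient.exact hcd
    obtain ⟨G, hG⟩ := hl (I × USphere n) inferInstance inferInstance
      F.toContinuousMap (0, SpherePt n) a
      (by rw [ContinuousMap.HomotopyWith.coe_toContinuousMap, F.apply_zero]
          show j (φ.1 _) = _; rw [φ.2])
    refine Quotient.sound ⟨⟨⟨⟨fun q => G q, G.continuous⟩, ?_, ?_⟩, ?_⟩⟩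
    · intro x; apply hj
      rw [hG, ContinuousMap.HomotopyWith.coe_toContinuousMap, F.apply_zero]; rfl
    · intro x; apply hj
      rw [hG, ContinuousMap.HomotopyWith.coe_toContinuousMap, F.apply_one]; rfl
    · intro t x hx; apply hj
      show j (G (t, x)) = j (φ.1 x)
      rw [hG, ContinuousMap.HomotopyWith.coe_toContinuousMap]
      exact F.eq_fst t hx
  · intro c
    induction c using Quotient.ind with | _ ψ => ?_
    obtain ⟨φ0, hφ0⟩ := hl (USphere n) inferInstance inferInstance ψ.1 (SpherePt n) a ψ.2
    have hb : φ0 (SpherePt n) = a := hj (by rw [hφ0, ψ.2])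
    refine ⟨⟦⟨φ0, hb⟩⟧, ?_⟩
    show Quotient.mk _ _ = Quotient.mk _ _
    congr 1
    exact Subtype.ext (ContinuousMap.ext hφ0)

end AuxQF

noncomputable section AuxQF2
open Metric unitInterval

variable {X Y : Type*} [TopologicalSpace X] [TopologicalSpace Y]
  (p : C(X, Y)) (X' : Set X) (y : Y)

/-- Inclusion of restricted strict fiber into the strict fiber. -/
def jFmap : C(StrictFiber (p.restrict X') y, StrictFiber p y) :=
  ⟨fun z => ⟨z.1.1, z.2⟩,
    Continuous.subtype_mk (continuous_subtype_val.comp continuous_subtype_val) _⟩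

/-- Inclusion of restricted homotopy fiber into the homotopy fiber. -/
def jEmap : C(HoFiber (p.restrict X') y, HoFiber p y) :=
  ⟨fun e => ⟨(e.1.1.1, e.1.2), e.2⟩,
    Continuous.subtype_mk
      (((continuous_subtype_val.comp continuous_fst).comp continuous_subtype_val).prodMk
        (continuous_snd.comp continuous_subtype_val)) _⟩

lemma jFmap_injective : Function.Injective (jFmap p X' y) := by
  intro a b h
  have h1 : (a.1.1 : X) = b.1.1 := congrArg (fun z : StrictFiber p y => z.1) h
  exact Subtype.ext (Subtype.ext h1)

lemma jEmap_injective : Function.Injective (jEmap p X' y) := by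
  intro a b h
  have h1 : (a.1.1 : X) = b.1.1 := congrArg (fun e : HoFiber p y => e.1.1) h
  have h2 : a.1.2 = b.1.2 := congrArg (fun e : HoFiber p y => e.1.2) h
  exact Subtype.ext (Prod.ext (Subtype.ext h1) h2)

lemma liftsAll_jFmap (hX' : IsClopen X') : LiftsAll (jFmap p X' y) := by
  intro K _ _ g k0 a0 h0
  have hS : IsClopen {z : StrictFiber p y | (z : X) ∈ X'} := hX'.preimage continuous_subtype_val
  have hmem : ∀ k, ((g k : X)) ∈ X' := by
    refine mem_of_mem_clopen g hS (k0 := k0) ?_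
    rw [h0]; exact a0.1.2
  refine ⟨⟨fun k => ⟨⟨(g k : X), hmem k⟩, (g k).2⟩,
    Continuous.subtype_mk (Continuous.subtype_mk
      (continuous_subtype_val.comp g.continuous) _) _⟩, fun k => rfl⟩

lemma liftsAll_jEmap (hX' : IsClopen X') : LiftsAll (jEmap p X' y) := by
  intro K _ _ g k0 a0 h0
  have hS : IsClopen {e : HoFiber p y | e.1.1 ∈ X'} :=
    hX'.preimage (continuous_fst.comp continuous_subtype_val)
  have hmem : ∀ k, (g k).1.1 ∈ X' := by
    refine mem_of_mem_clopen g hS (k0 := k0) ?_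
    rw [h0]; exact a0.1.1.2
  refine ⟨⟨fun k => ⟨(⟨(g k).1.1, hmem k⟩, (g k).1.2), (g k).2.1, (g k).2.2⟩,
    Continuous.subtype_mk
      ((Continuous.subtype_mk ((continuous_fst.comp continuous_subtype_val).comp g.continuous)
        _).prodMk ((continuous_snd.comp continuous_subtype_val).comp g.continuous)) _⟩,
    fun k => rfl⟩

end AuxQF2

/-- if `X' ⊆ X` is a union of connected components (an open and closed
subset) and `p : X → Y` is a quasifibration, then the restriction `p|_{X'}` is a
quasifibration. -/
theorem quasifibration_restrict {X Y : Type*} [TopologicalSpace X] [TopologicalSpace Y]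
    (p : C(X, Y)) (X' : Set X)
    (hcomp : ∀ x ∈ X', connectedComponent x ⊆ X')
    (hopen : IsOpen X') (hclosed : IsClosed X')
    (hp : IsQuasifibration p) :
    IsQuasifibration (p.restrict X') := by
  intro y
  have hX' : IsClopen X' := ⟨hclosed, hopen⟩
  set f := fiberToHoFiber p y with hf
  set f' := fiberToHoFiber (p.restrict X') y with hf'
  have hjFi := jFmap_injective p X' y
  have hjEi := jEmap_injective p X' y
  have hlF := liftsAll_jFmap p X' y hX'
  have hlE := liftsAll_jEmap p X' y hX'
  obtain ⟨⟨h0i, h0s⟩, hni⟩ := hp y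
  constructor
  · constructor
    · intro c d hcd
      induction c using Quotient.ind with | _ a => ?_
      induction d using Quotient.ind with | _ b => ?_
      have h1 : Joined (f' a) (f' b) := Quotient.exact hcd
      have h3 : Joined (f (jFmap p X' y a)) (f (jFmap p X' y b)) :=
        ⟨h1.somePath.map (jEmap p X' y).continuous⟩
      have h4 : Pi0Map f ⟦jFmap p X' y a⟧ = Pi0Map f ⟦jFmap p X' y b⟧ := Quotient.sound h3
      have h5 : Joined (jFmap p X' y a) (jFmap p X' y b) := Quotient.exact (h0i h4)
      exact Quotient.sound (joined_lift hjFi hlF h5)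
    · intro c
      induction c using Quotient.ind with | _ e' => ?_
      obtain ⟨d, hd⟩ := h0s ⟦jEmap p X' y e'⟧
      induction d using Quotient.ind with | _ z => ?_
      have hJ : Joined (f z) (jEmap p X' y e') := Quotient.exact hd
      have hS : IsClopen {e : HoFiber p y | e.1.1 ∈ X'} :=
        hX'.preimage (continuous_fst.comp continuous_subtype_val)
      have h1 : hJ.somePath.toContinuousMap (1 : unitInterval) ∈
          {e : HoFiber p y | e.1.1 ∈ X'} := by
        simp only [Path.coe_toContinuousMap, Path.target]
        exact e'.1.1.2
      have hz : (z : X) ∈ X' := by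
        have h2 := mem_of_mem_clopen hJ.somePath.toContinuousMap hS h1 0
        simp only [Path.coe_toContinuousMap, Path.source] at h2
        exact h2
      refine ⟨⟦⟨⟨z.1, hz⟩, z.2⟩⟧, ?_⟩
      have hJ2 : Joined (jEmap p X' y (f' ⟨⟨z.1, hz⟩, z.2⟩)) (jEmap p X' y e') := hJ
      exact Quotient.sound (joined_lift hjEi hlE hJ2)
  · intro n hn1 x'
    have bjF := piMap_bij_of_liftsAll hjFi hlF hn1 x'
    have bjE := piMap_bij_of_liftsAll hjEi hlE hn1 (f' x')
    have bf := hni n hn1 (jFmap p X' y x')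
    have square : ∀ a : PiSet n (StrictFiber (p.restrict X') y) x',
        PiMap n (jEmap p X' y) (f' x') (PiMap n f' x' a)
          = PiMap n f (jFmap p X' y x') (PiMap n (jFmap p X' y) x' a) := by
      intro a
      induction a using Quotient.ind with | _ φ => ?_
      show Quotient.mk _ _ = Quotient.mk _ _
      congr 1
    constructor
    · intro c d hcd
      have h1 := congrArg (PiMap n (jEmap p X' y) (f' x')) hcd
      rw [square c, square d] at h1
      exact bjF.injective (bf.injective h1)
    · intro b
      obtain ⟨d, hd⟩ := bf.surjective (PiMap n (jEmap p X' y) (f' x') b)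
      obtain ⟨a, ha⟩ := bjF.surjective d
      refine ⟨a, bjE.injective ?_⟩
      rw [square a, ha, hd]
end

section
/- Let X → Y be an (r+1)-cube of spaces viewed as a map of r-cubes. If both Y (as an r-cube) and the (r+1)-cube X → Y are k-cartesian, then X is k-cartesian as an r-cube. -/
open Metric unitInterval

noncomputable section

open ContinuousMap

/-- The affine map of standard simplices induced by a map of index sets. -/
def simplexMap {m n : ℕ} (φ : Fin m → Fin n) :
    C((stdSimplex ℝ (Fin m) : Set _), (stdSimplex ℝ (Fin n) : Set _)) where
  toFun x := ⟨fun i => ∑ j ∈ Finset.univ.filter (fun j => φ j = i), x.1 j, by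
    constructor
    · intro i
      exact Finset.sum_nonneg fun j _ => x.2.1 j
    · rw [Finset.sum_fiberwise_of_maps_to (fun j _ => Finset.mem_univ (φ j)) x.1]
      exact x.2.2⟩
  continuous_toFun := by
    apply Continuous.subtype_mk
    exact continuous_pi fun i => continuous_finset_sum _
      (fun j _ => (continuous_apply j).comp continuous_subtype_val)

/-- A diagram of spaces indexed by a partially ordered set, with strictly functorial
continuous structure maps. -/
structure PDiagram (P : Type*) [PartialOrder P] where
  obj : P → Type*
  topo : ∀ p, TopologicalSpace (obj p)
  map : ∀ {p q : P}, p ≤ q → C(obj p, obj q)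
  map_id : ∀ p : P, map (le_refl p) = ContinuousMap.id (obj p)
  map_comp : ∀ {p q r : P} (h₁ : p ≤ q) (h₂ : q ≤ r),
    map (h₁.trans h₂) = (map h₂).comp (map h₁)

attribute [instance] PDiagram.topo

/-- Restriction of a diagram along a monotone map of posets. -/
def PDiagram.pull {P Q : Type*} [PartialOrder P] [PartialOrder Q]
    (D : PDiagram P) (f : Q →o P) : PDiagram Q where
  obj q := D.obj (f q)
  topo q := D.topo _
  map h := D.map (f.monotone h)
  map_id _ := D.map_id _
  map_comp _ _ := D.map_comp _ _

/-- The homotopy limit of a poset-indexed diagram of spaces: the space of coherent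
families of maps from standard simplices, indexed by chains in the poset.  (This is
the Bousfield–Kan formula, written in terms of chains.) -/
def Holim {P : Type*} [PartialOrder P] (D : PDiagram P) : Type _ :=
  { f : ∀ (n : ℕ) (c : Fin (n + 1) →o P),
      C((stdSimplex ℝ (Fin (n + 1)) : Set _), D.obj (c (Fin.last n))) //
    ∀ (m n : ℕ) (c : Fin (n + 1) →o P) (φ : Fin (m + 1) →o Fin (n + 1)),
      (D.map (c.monotone (Fin.le_last (φ (Fin.last m))))).comp (f m (c.comp φ)) =
        (f n c).comp (simplexMap φ) }

instance {P : Type*} [PartialOrder P] (D : PDiagram P) : TopologicalSpace (Holim D) := by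
  unfold Holim; infer_instance

/-- A cube of spaces indexed by subsets of `ι`. -/
abbrev PCube (ι : Type*) := PDiagram (Set ι)

/-- The poset of nonempty subsets of `ι`. -/
abbrev NESet (ι : Type*) := { S : Set ι // S.Nonempty }

/-- The inclusion of the nonempty subsets into all subsets. -/
def NESet.incl (ι : Type*) : NESet ι →o Set ι := ⟨Subtype.val, fun _ _ h => h⟩

/-- The canonical map from the initial space of a cube to the homotopy limit of the
punctured cube (the restriction to nonempty subsets). -/
def cubeAMap {ι : Type*} (X : PCube ι) :
    C(X.obj ∅, Holim (X.pull (NESet.incl ι))) where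
  toFun x := ⟨fun n c => ContinuousMap.const _ (X.map (Set.empty_subset _) x), by
    intro m n c φ
    ext t
    show X.map _ (X.map _ x) = X.map _ x
    exact ((ContinuousMap.congr_fun (X.map_comp _ _) x).trans
      (ContinuousMap.comp_apply _ _ _)).symm⟩
  continuous_toFun := by
    apply Continuous.subtype_mk
    refine continuous_pi fun n => continuous_pi fun c => ?_
    exact (ContinuousMap.const'.comp (X.map (Set.empty_subset _))).continuous

/-- A cube is `k`-cartesian if the canonical map from the initial space to the
homotopy limit of the punctured cube is `k`-connected. -/
def IsCartesianC {ι : Type*} (k : ℤ) (X : PCube ι) : Prop :=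
  ConnMap k (cubeAMap X)

end

noncomputable section

/-- The carrier of the homotopy colimit of a poset-indexed diagram: chains in the
poset together with a simplex parameter and a point in the space at the bottom of
the chain. -/
def HocolimCarrier {P : Type*} [PartialOrder P] (D : PDiagram P) : Type _ :=
  Σ (n : ℕ) (c : Fin (n + 1) →o P), (stdSimplex ℝ (Fin (n + 1)) : Set _) × D.obj (c 0)

/-- The gluing relation defining the homotopy colimit. -/
inductive HocolimRel {P : Type*} [PartialOrder P] (D : PDiagram P) :
    HocolimCarrier D → HocolimCarrier D → Prop
  | glue (m n : ℕ) (c : Fin (n + 1) →o P) (φ : Fin (m + 1) →o Fin (n + 1))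
      (t : (stdSimplex ℝ (Fin (m + 1)) : Set _)) (z : D.obj (c 0)) :
      HocolimRel D ⟨m, c.comp φ, (t, D.map (c.monotone (Fin.zero_le (φ 0))) z)⟩
        ⟨n, c, (simplexMap φ t, z)⟩

instance {P : Type*} [PartialOrder P] (D : PDiagram P) :
    TopologicalSpace (HocolimCarrier D) := by
  unfold HocolimCarrier; infer_instance

/-- The homotopy colimit of a poset-indexed diagram (the bar construction). -/
def Hocolim {P : Type*} [PartialOrder P] (D : PDiagram P) : Type _ :=
  Quot (HocolimRel D)

instance {P : Type*} [PartialOrder P] (D : PDiagram P) :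
    TopologicalSpace (Hocolim D) := by
  unfold Hocolim; infer_instance

/-- The poset of proper subsets of `ι`. -/
abbrev PrSet (ι : Type*) := { S : Set ι // S ≠ Set.univ }

/-- The inclusion of the proper subsets into all subsets. -/
def PrSet.incl (ι : Type*) : PrSet ι →o Set ι := ⟨Subtype.val, fun _ _ h => h⟩

/-- The canonical map from the homotopy colimit of the restriction of a cube to
proper subsets, to the final space of the cube. -/
def cubeBMap {ι : Type*} (X : PCube ι) :
    C(Hocolim (X.pull (PrSet.incl ι)), X.obj Set.univ) where
  toFun := Quot.lift (fun w => X.map (Set.subset_univ _) w.2.2.2) (by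
    rintro _ _ ⟨m, n, c, φ, t, z⟩
    show X.map _ (X.map _ z) = X.map _ z
    exact ((ContinuousMap.congr_fun (X.map_comp _ _) z).trans
      (ContinuousMap.comp_apply _ _ _)).symm)
  continuous_toFun := by
    apply continuous_quot_lift
    apply continuous_sigma
    intro n
    apply continuous_sigma
    intro c
    exact (X.map (Set.subset_univ _)).continuous.comp continuous_snd

/-- A cube is `k`-cocartesian if the canonical map from the homotopy colimit of the
restriction to proper subsets, to the final space, is `k`-connected. -/
def IsCocartesianC {ι : Type*} (k : ℤ) (X : PCube ι) : Prop :=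
  ConnMap k (cubeBMap X)

end

noncomputable section

/-- A (strictly natural) map of cubes of spaces. -/
structure CubeMap {ι : Type*} (X Y : PCube ι) where
  app : ∀ S : Set ι, C(X.obj S, Y.obj S)
  natural : ∀ ⦃S T : Set ι⦄ (h : S ⊆ T),
    (app T).comp (X.map h) = (Y.map h).comp (app S)

/-- The total diagram of a map of `ι`-cubes, indexed by `Set ι × Bool`: this realizes
a map of `r`-cubes as an `(r+1)`-cube. -/
def CubeMap.tdiag {ι : Type*} {X Y : PCube ι} (F : CubeMap X Y) :
    PDiagram (Set ι × Bool) where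
  obj p := match p with
    | (S, false) => X.obj S
    | (S, true) => Y.obj S
  topo p := match p with
    | (S, false) => X.topo S
    | (S, true) => Y.topo S
  map {p q} h := match p, q, h with
    | (S, false), (T, false), h => X.map h.1
    | (S, false), (_, true), h => (Y.map h.1).comp (F.app S)
    | (_, true), (_, true), h => Y.map h.1
    | (_, true), (_, false), h => absurd h.2 (by simp)
  map_id p := by
    rcases p with ⟨S, b⟩
    cases b
    · exact X.map_id S
    · exact Y.map_id S
  map_comp {p q r} h₁ h₂ := by
    rcases p with ⟨S, bp⟩; rcases q with ⟨T, bq⟩; rcases r with ⟨U, br⟩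
    cases bp <;> cases bq <;> cases br
    · exact X.map_comp h₁.1 h₂.1
    · show (Y.map (h₁.1.trans h₂.1)).comp (F.app S) =
        ((Y.map h₂.1).comp (F.app T)).comp (X.map h₁.1)
      rw [ContinuousMap.comp_assoc, F.natural h₁.1, ← ContinuousMap.comp_assoc,
        ← Y.map_comp]
    · exact absurd h₂.2 (by simp)
    · show (Y.map (h₁.1.trans h₂.1)).comp (F.app S) =
        (Y.map h₂.1).comp ((Y.map h₁.1).comp (F.app S))
      rw [Y.map_comp h₁.1 h₂.1, ContinuousMap.comp_assoc]
    · exact absurd h₁.2 (by simp)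
    · exact absurd h₁.2 (by simp)
    · exact absurd h₂.2 (by simp)
    · exact Y.map_comp h₁.1 h₂.1

/-- The poset of elements of `Set ι × Bool` other than the initial one `(∅, false)`. -/
abbrev TPunct (ι : Type*) := { p : Set ι × Bool // p ≠ (∅, false) }

/-- The inclusion of the punctured total poset. -/
def TPunct.incl (ι : Type*) : TPunct ι →o Set ι × Bool := ⟨Subtype.val, fun _ _ h => h⟩

/-- The canonical map from the initial space of the total cube of a cube map to the
homotopy limit of the punctured total cube. -/
def CubeMap.aMapT {ι : Type*} {X Y : PCube ι} (F : CubeMap X Y) :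
    C(X.obj ∅, Holim (F.tdiag.pull (TPunct.incl ι))) where
  toFun x := ⟨fun n c =>
      ContinuousMap.const _
        (F.tdiag.map (⟨Set.empty_subset _, Bool.false_le _⟩ :
          ((∅, false) : Set ι × Bool) ≤ ((c (Fin.last n)).1 : Set ι × Bool)) x), by
    intro m n c φ
    ext t
    simp only [ContinuousMap.comp_apply, ContinuousMap.const_apply]
    exact (ContinuousMap.congr_fun
      (F.tdiag.map_comp
        (⟨Set.empty_subset _, Bool.false_le _⟩ : ((∅, false) : Set ι × Bool) ≤
          ((c (φ (Fin.last m))).1 : Set ι × Bool))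
        (c.monotone (Fin.le_last (φ (Fin.last m))) :
          ((c (φ (Fin.last m))).1 : Set ι × Bool) ≤ ((c (Fin.last n)).1 : Set ι × Bool)))
      x).symm⟩
  continuous_toFun := by
    apply Continuous.subtype_mk
    refine continuous_pi fun n => continuous_pi fun c => ?_
    exact (ContinuousMap.const'.comp
      (F.tdiag.map (⟨Set.empty_subset _, Bool.false_le _⟩ :
        ((∅, false) : Set ι × Bool) ≤ ((c (Fin.last n)).1 : Set ι × Bool)))).continuous

/-- A map of `r`-cubes, considered as an `(r+1)`-cube, is `k`-cartesian. -/
def CubeMap.IsCartesian {ι : Type*} {X Y : PCube ι} (k : ℤ) (F : CubeMap X Y) : Prop :=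
  ConnMap k F.aMapT

end

noncomputable section

open unitInterval

/-- The cube of homotopy fibers of a cube map over a basepoint `y` of `Y(∅)`. -/
def CubeMap.fiberCube {ι : Type*} {X Y : PCube ι} (F : CubeMap X Y)
    (y : Y.obj ∅) : PCube ι where
  obj S := HoFiber (F.app S) (Y.map (Set.empty_subset S) y)
  topo _ := inferInstance
  map {S T} h :=
    { toFun := fun z => ⟨(X.map h z.1.1, (Y.map h).comp z.1.2), by
        constructor
        · show (Y.map h) (z.1.2 0) = _
          rw [z.2.1]
          exact (ContinuousMap.congr_fun (F.natural h) z.1.1).symm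
        · show (Y.map h) (z.1.2 1) = _
          rw [z.2.2, ← ContinuousMap.comp_apply, ← Y.map_comp]⟩
      continuous_toFun := by
        apply Continuous.subtype_mk
        exact ((X.map h).continuous.comp
            (continuous_fst.comp continuous_subtype_val)).prodMk
          ((Y.map h).continuous_postcomp.comp
            (continuous_snd.comp continuous_subtype_val)) }
  map_id S := by
    refine ContinuousMap.ext fun z => Subtype.ext (Prod.ext ?_ ?_)
    · show X.map (le_refl S) z.1.1 = z.1.1
      rw [X.map_id]; rfl
    · show (Y.map (le_refl S)).comp z.1.2 = z.1.2
      rw [Y.map_id]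
      exact ContinuousMap.id_comp _
  map_comp {S T U} h₁ h₂ := by
    refine ContinuousMap.ext fun z => Subtype.ext (Prod.ext ?_ ?_)
    · show X.map (h₁.trans h₂) z.1.1 = X.map h₂ (X.map h₁ z.1.1)
      rw [X.map_comp h₁ h₂]; rfl
    · show (Y.map (h₁.trans h₂)).comp z.1.2 =
        (Y.map h₂).comp ((Y.map h₁).comp z.1.2)
      rw [Y.map_comp h₁ h₂, ContinuousMap.comp_assoc]

/-- The subcube of a cube determined by a family of subsets preserved by the
structure maps. -/
def subCube {ι : Type*} (Y : PCube ι) (U : ∀ S : Set ι, Set (Y.obj S))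
    (hU : ∀ ⦃S T : Set ι⦄ (h : S ⊆ T), Set.MapsTo (Y.map h) (U S) (U T)) :
    PCube ι where
  obj S := U S
  topo _ := inferInstance
  map {S T} h :=
    { toFun := fun z => ⟨Y.map h z.1, hU h z.2⟩
      continuous_toFun :=
        Continuous.subtype_mk ((Y.map h).continuous.comp continuous_subtype_val) _ }
  map_id S := by
    ext z
    show Y.map (le_refl S) z.1 = z.1
    rw [Y.map_id]; rfl
  map_comp {S T V} h₁ h₂ := by
    ext z
    show Y.map (h₁.trans h₂) z.1 = Y.map h₂ (Y.map h₁ z.1)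
    rw [Y.map_comp h₁ h₂]; rfl

/-- The inclusion of a subcube, as a map of cubes. -/
def subCubeIncl {ι : Type*} (Y : PCube ι) (U : ∀ S : Set ι, Set (Y.obj S))
    (hU : ∀ ⦃S T : Set ι⦄ (h : S ⊆ T), Set.MapsTo (Y.map h) (U S) (U T)) :
    CubeMap (subCube Y U hU) Y where
  app S := ⟨Subtype.val, continuous_subtype_val⟩
  natural S T h := rfl

end

noncomputable section Chunk1

open unitInterval ContinuousMap

variable {ι : Type}

/-! ### Generalities on `Bool` order and chains in `TPunct` -/

lemma bool_le_false {a b : Bool} (h : a ≤ b) (hb : b = false) : a = false := by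
  subst hb
  cases a
  · rfl
  · exact absurd h (by decide)

lemma bool_true_le {a b : Bool} (h : a ≤ b) (ha : a = true) : b = true := by
  subst ha
  cases b
  · exact absurd h (by decide)
  · rfl

/-- The boolean coordinate of a chain value. -/
def cB {n : ℕ} (c : Fin (n + 1) →o TPunct ι) (j : Fin (n + 1)) : Bool := ((c j).1).2

lemma cB_mono {n : ℕ} (c : Fin (n + 1) →o TPunct ι) {j j' : Fin (n + 1)} (h : j ≤ j') :
    cB c j ≤ cB c j' := (c.monotone h).2

lemma cB_comp {m n : ℕ} (c : Fin (n + 1) →o TPunct ι) (φ : Fin (m + 1) →o Fin (n + 1))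
    (l : Fin (m + 1)) : cB (c.comp φ) l = cB c (φ l) := rfl

/-! ### Translators between `tdiag.obj` and `X.obj`/`Y.obj` -/

variable {X Y : PCube ι} (F : CubeMap X Y)

/-- Identification of `tdiag.obj p` with `X.obj p.1` when `p.2 = false`. -/
def XtoT : ∀ {p : Set ι × Bool}, p.2 = false → C(X.obj p.1, F.tdiag.obj p) :=
  fun {p} => match p with
  | (_, false) => fun _ => ContinuousMap.id _
  | (_, true) => fun h => absurd h (by simp)

def TtoX : ∀ {p : Set ι × Bool}, p.2 = false → C(F.tdiag.obj p, X.obj p.1) :=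
  fun {p} => match p with
  | (_, false) => fun _ => ContinuousMap.id _
  | (_, true) => fun h => absurd h (by simp)

/-- Identification of `tdiag.obj p` with `Y.obj p.1` when `p.2 = true`. -/
def YtoT : ∀ {p : Set ι × Bool}, p.2 = true → C(Y.obj p.1, F.tdiag.obj p) :=
  fun {p} => match p with
  | (_, true) => fun _ => ContinuousMap.id _
  | (_, false) => fun h => absurd h (by simp)

def TtoY : ∀ {p : Set ι × Bool}, p.2 = true → C(F.tdiag.obj p, Y.obj p.1) :=
  fun {p} => match p with
  | (_, true) => fun _ => ContinuousMap.id _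
  | (_, false) => fun h => absurd h (by simp)

lemma TtoX_XtoT {p : Set ι × Bool} (hp : p.2 = false) (x : X.obj p.1) :
    TtoX F hp (XtoT F hp x) = x := by
  rcases p with ⟨S, b⟩
  cases b
  · rfl
  · exact absurd hp (by simp)

lemma TtoY_YtoT {p : Set ι × Bool} (hp : p.2 = true) (y : Y.obj p.1) :
    TtoY F hp (YtoT F hp y) = y := by
  rcases p with ⟨S, b⟩
  cases b
  · exact absurd hp (by simp)
  · rfl

lemma tmap_ff {p q : Set ι × Bool} (h : p ≤ q) (hp : p.2 = false) (hq : q.2 = false)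
    (x : X.obj p.1) :
    F.tdiag.map h (XtoT F hp x) = XtoT F hq (X.map h.1 x) := by
  rcases p with ⟨S, bp⟩
  rcases q with ⟨T, bq⟩
  cases bp
  · cases bq
    · rfl
    · exact absurd hq (by simp)
  · exact absurd hp (by simp)

lemma tmap_ft {p q : Set ι × Bool} (h : p ≤ q) (hp : p.2 = false) (hq : q.2 = true)
    (x : X.obj p.1) :
    F.tdiag.map h (XtoT F hp x) = YtoT F hq (Y.map h.1 (F.app p.1 x)) := by
  rcases p with ⟨S, bp⟩
  rcases q with ⟨T, bq⟩
  cases bp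
  · cases bq
    · exact absurd hq (by simp)
    · rfl
  · exact absurd hp (by simp)

lemma tmap_tt {p q : Set ι × Bool} (h : p ≤ q) (hp : p.2 = true) (hq : q.2 = true)
    (y : Y.obj p.1) :
    F.tdiag.map h (YtoT F hp y) = YtoT F hq (Y.map h.1 y) := by
  rcases p with ⟨S, bp⟩
  rcases q with ⟨T, bq⟩
  cases bp
  · exact absurd hp (by simp)
  · cases bq
    · exact absurd hq (by simp)
    · rfl

/-- Any element of `tdiag.obj p` with `p.2 = false` is in the image of `XtoT`. -/
lemma XtoT_TtoX {p : Set ι × Bool} (hp : p.2 = false) (x : F.tdiag.obj p) :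
    XtoT F hp (TtoX F hp x) = x := by
  rcases p with ⟨S, b⟩
  cases b
  · rfl
  · exact absurd hp (by simp)

lemma YtoT_TtoY {p : Set ι × Bool} (hp : p.2 = true) (x : F.tdiag.obj p) :
    YtoT F hp (TtoY F hp x) = x := by
  rcases p with ⟨S, b⟩
  cases b
  · exact absurd hp (by simp)
  · rfl

end Chunk1

noncomputable section Chunk2

open unitInterval ContinuousMap

variable {ι : Type} {X Y : PCube ι} (F : CubeMap X Y)

/-- Pushforward of points of the punctured homotopy limit along a cube map. -/
def pushF : C(Holim (X.pull (NESet.incl ι)), Holim (Y.pull (NESet.incl ι))) where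
  toFun w := ⟨fun n c => (F.app ((c (Fin.last n)).1 : Set ι)).comp (w.1 n c), by
    intro m n c φ
    ext t
    show Y.map _ (F.app _ (w.1 m (c.comp φ) t)) = F.app _ (w.1 n c (simplexMap φ t))
    exact (ContinuousMap.congr_fun (F.natural _) _).symm.trans
      (congrArg (F.app _) (ContinuousMap.congr_fun (w.2 m n c φ) t))⟩
  continuous_toFun := by
    apply Continuous.subtype_mk
    refine continuous_pi fun n => continuous_pi fun c => ?_
    exact (ContinuousMap.continuous_postcomp _).comp
      ((continuous_apply c).comp ((continuous_apply n).comp continuous_subtype_val))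

/-- A chain of nonempty sets, viewed as a chain in the punctured total poset via
the `false` coordinate. -/
def toTP {n : ℕ} (c : Fin (n + 1) →o NESet ι) : Fin (n + 1) →o TPunct ι where
  toFun j := ⟨((c j).1, false), fun h => (c j).2.ne_empty (congrArg Prod.fst h)⟩
  monotone' j j' h := ⟨c.monotone h, le_refl false⟩

/-- Restriction of the total punctured homotopy limit to the `X`-part. -/
def resTP : C(Holim (F.tdiag.pull (TPunct.incl ι)), Holim (X.pull (NESet.incl ι))) where
  toFun w := ⟨fun n c => w.1 n (toTP c), fun m n c φ => w.2 m n (toTP c) φ⟩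
  continuous_toFun := by
    apply Continuous.subtype_mk
    refine continuous_pi fun n => continuous_pi fun c => ?_
    exact (continuous_apply (toTP c)).comp ((continuous_apply n).comp continuous_subtype_val)

lemma res_aMapT (x : X.obj (∅ : Set ι)) :
    resTP F (F.aMapT x) = cubeAMap X x := rfl

lemma pushF_aMap (x : X.obj (∅ : Set ι)) :
    pushF F (cubeAMap X x) = cubeAMap Y (F.app ∅ x) := by
  apply Subtype.ext
  funext n c
  ext t
  show F.app _ (X.map _ x) = Y.map _ (F.app ∅ x)
  exact ContinuousMap.congr_fun (F.natural _) x

end Chunk2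

noncomputable section Chunk3

open unitInterval ContinuousMap

variable {ι : Type}

/-- Points of the standard `n`-simplex. -/
abbrev SPt (n : ℕ) : Type := (stdSimplex ℝ (Fin (n + 1)) : Set _)

lemma TPunct_nonempty_of_false (p : TPunct ι) (hp : p.1.2 = false) : p.1.1.Nonempty := by
  rw [Set.nonempty_iff_ne_empty]
  intro h
  exact p.2 (Prod.ext h hp)

/-- The set of `false` indices of a chain. -/
def Fa {n : ℕ} (c : Fin (n + 1) →o TPunct ι) : Finset (Fin (n + 1)) :=
  Finset.univ.filter (fun j => cB c j = false)

lemma mem_Fa {n : ℕ} {c : Fin (n + 1) →o TPunct ι} {j : Fin (n + 1)} :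
    j ∈ Fa c ↔ cB c j = false := by simp [Fa]

/-- The largest `false` index of a chain whose first value is `false`. -/
def iF {n : ℕ} (c : Fin (n + 1) →o TPunct ι) (h0 : cB c 0 = false) : Fin (n + 1) :=
  (Fa c).max' ⟨0, mem_Fa.2 h0⟩

lemma cB_iF {n : ℕ} (c : Fin (n + 1) →o TPunct ι) (h0 : cB c 0 = false) :
    cB c (iF c h0) = false :=
  mem_Fa.1 ((Fa c).max'_mem ⟨0, mem_Fa.2 h0⟩)

lemma le_iF_iff {n : ℕ} (c : Fin (n + 1) →o TPunct ι) (h0 : cB c 0 = false)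
    (j : Fin (n + 1)) : j ≤ iF c h0 ↔ cB c j = false := by
  constructor
  · intro h
    exact bool_le_false (cB_mono c h) (cB_iF c h0)
  · intro h
    exact (Fa c).le_max' j (mem_Fa.2 h)

/-- The false part of a mixed chain, clamped at the largest false index. -/
def cCl {n : ℕ} (c : Fin (n + 1) →o TPunct ι) (h0 : cB c 0 = false) :
    Fin (n + 1) →o NESet ι where
  toFun j := ⟨(c (min j (iF c h0))).1.1,
    TPunct_nonempty_of_false _ ((le_iF_iff c h0 _).1 (min_le_right _ _))⟩
  monotone' j j' h := (c.monotone (min_le_min h (le_refl _))).1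

lemma cCl_apply {n : ℕ} (c : Fin (n + 1) →o TPunct ι) (h0 : cB c 0 = false)
    (j : Fin (n + 1)) : (cCl c h0 j).1 = (c (min j (iF c h0))).1.1 := rfl

/-- Total mass of the false coordinates. -/
def vFa {n : ℕ} (c : Fin (n + 1) →o TPunct ι) (t : SPt n) : ℝ :=
  ∑ j ∈ Fa c, t.1 j

lemma vFa_nonneg {n : ℕ} (c : Fin (n + 1) →o TPunct ι) (t : SPt n) : 0 ≤ vFa c t :=
  Finset.sum_nonneg fun j _ => t.2.1 j

lemma vFa_le_one {n : ℕ} (c : Fin (n + 1) →o TPunct ι) (t : SPt n) : vFa c t ≤ 1 := by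
  have := Finset.sum_le_sum_of_subset_of_nonneg (Fa c).subset_univ
    (fun i _ _ => t.2.1 i)
  rw [t.2.2] at this
  exact this

/-- Total mass of the false coordinates, as an element of the unit interval. -/
def vI {n : ℕ} (c : Fin (n + 1) →o TPunct ι) (t : SPt n) : I :=
  ⟨vFa c t, ⟨vFa_nonneg c t, vFa_le_one c t⟩⟩

lemma continuous_vFa {n : ℕ} (c : Fin (n + 1) →o TPunct ι) : Continuous (vFa c) :=
  continuous_finset_sum _ fun j _ => (continuous_apply j).comp continuous_subtype_val

lemma continuous_vI {n : ℕ} (c : Fin (n + 1) →o TPunct ι) : Continuous (vI c) :=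
  Continuous.subtype_mk (continuous_vFa c) _

/-- The first vertex of the standard simplex. -/
def vert0 (n : ℕ) : SPt n :=
  ⟨fun j => if j = 0 then 1 else 0, by
    constructor
    · intro j
      dsimp only
      split <;> norm_num
    · simp⟩

/-- Renormalized false part of a simplex point. -/
def NF {n : ℕ} (c : Fin (n + 1) →o TPunct ι) (t : SPt n) : SPt n :=
  if hv : vFa c t = 0 then vert0 n else
    ⟨fun j => if cB c j = false then t.1 j / vFa c t else 0, by
      constructor
      · intro j
        dsimp only
        split
        · exact div_nonneg (t.2.1 j) (vFa_nonneg c t)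
        · exact le_refl 0
      · rw [← Finset.sum_filter]
        rw [show (Finset.univ.filter fun j => cB c j = false) = Fa c from rfl]
        rw [← Finset.sum_div]
        exact div_self hv⟩

lemma NF_apply_of_ne {n : ℕ} (c : Fin (n + 1) →o TPunct ι) (t : SPt n)
    (hv : vFa c t ≠ 0) (j : Fin (n + 1)) :
    (NF c t).1 j = if cB c j = false then t.1 j / vFa c t else 0 := by
  rw [NF, dif_neg hv]

lemma NF_zero_of_true {n : ℕ} (c : Fin (n + 1) →o TPunct ι) (h0 : cB c 0 = false)
    (t : SPt n) (j : Fin (n + 1)) (hj : cB c j = true) : (NF c t).1 j = 0 := by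
  rw [NF]
  split
  · show (if j = 0 then (1:ℝ) else 0) = 0
    rw [if_neg]
    intro h
    rw [h, h0] at hj
    exact Bool.noConfusion hj
  · show (if cB c j = false then t.1 j / vFa c t else 0) = 0
    rw [if_neg]
    rw [hj]
    exact Bool.noConfusion

/-- The clamping endomorphism of `Fin (m+1)`. -/
def clampOH {m : ℕ} (i' : Fin (m + 1)) : Fin (m + 1) →o Fin (m + 1) where
  toFun l := min l i'
  monotone' a b h := min_le_min h (le_refl _)

lemma simplexMap_apply {m n : ℕ} (φ : Fin m → Fin n)
    (t : (stdSimplex ℝ (Fin m) : Set _)) (j : Fin n) :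
    (simplexMap φ t).1 j = ∑ l ∈ Finset.univ.filter (fun l => φ l = j), t.1 l := rfl

/-- Clamping acts trivially on points supported below the clamp index. -/
lemma sM_clamp_eq {m : ℕ} (i' : Fin (m + 1)) (x : SPt m)
    (hx : ∀ l, ¬ l ≤ i' → x.1 l = 0) : simplexMap (clampOH i') x = x := by
  apply Subtype.ext
  funext j
  rw [simplexMap_apply]
  by_cases hj : j ≤ i'
  · have hjmem : j ∈ Finset.univ.filter (fun l => clampOH i' l = j) := by
      rw [Finset.mem_filter]; exact ⟨Finset.mem_univ _, min_eq_left hj⟩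
    refine Finset.sum_eq_single_of_mem j hjmem ?_
    intro l hl hlj
    have hli : min l i' = j := (Finset.mem_filter.1 hl).2
    -- l ≠ j and min l i' = j forces j = i' and l > i'
    apply hx
    intro hle
    rw [min_eq_left hle] at hli
    exact hlj hli
  · rw [Finset.sum_eq_zero, eq_comm]
    · exact hx j hj
    · intro l hl
      exfalso
      have hli : min l i' = j := (Finset.mem_filter.1 hl).2
      exact hj (hli ▸ min_le_right l i')

/-- Compatibility of the false mass with simplicial operators. -/
lemma vFa_sM {m n : ℕ} (c : Fin (n + 1) →o TPunct ι) (φ : Fin (m + 1) →o Fin (n + 1))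
    (t : SPt m) : vFa c (simplexMap φ t) = vFa (c.comp φ) t := by
  unfold vFa
  have : ∀ j ∈ Fa c, (simplexMap φ t).1 j
      = ∑ l ∈ Finset.univ.filter (fun l => φ l = j), t.1 l := fun j _ => rfl
  rw [Finset.sum_congr rfl this, Finset.sum_fiberwise_eq_sum_filter]
  apply Finset.sum_congr
  · ext l
    exact ⟨fun h => Finset.mem_filter.2 ⟨Finset.mem_univ _,
        (Finset.mem_filter.1 (Finset.mem_filter.1 h).2).2⟩,
      fun h => Finset.mem_filter.2 ⟨Finset.mem_univ _, Finset.mem_filter.2 ⟨Finset.mem_univ _,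
        (Finset.mem_filter.1 h).2⟩⟩⟩
  · intros; rfl

lemma vI_sM {m n : ℕ} (c : Fin (n + 1) →o TPunct ι) (φ : Fin (m + 1) →o Fin (n + 1))
    (t : SPt m) : vI c (simplexMap φ t) = vI (c.comp φ) t :=
  Subtype.ext (vFa_sM c φ t)

/-- Compatibility of renormalization with simplicial operators (nonzero mass). -/
lemma NF_sM {m n : ℕ} (c : Fin (n + 1) →o TPunct ι) (φ : Fin (m + 1) →o Fin (n + 1))
    (t : SPt m) (hv : vFa (c.comp φ) t ≠ 0) :
    NF c (simplexMap φ t) = simplexMap φ (NF (c.comp φ) t) := by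
  have hv' : vFa c (simplexMap φ t) ≠ 0 := by rw [vFa_sM]; exact hv
  apply Subtype.ext
  funext j
  rw [NF_apply_of_ne c _ hv' j, simplexMap_apply (⇑φ) (NF (c.comp φ) t) j]
  by_cases hb : cB c j = false
  · have hfib : ∀ l ∈ Finset.univ.filter (fun l => φ l = j),
        (NF (c.comp φ) t).1 l = t.1 l / vFa (c.comp φ) t := by
      intro l hl
      have hφl : φ l = j := by simpa using hl
      rw [NF_apply_of_ne _ _ hv l, cB_comp, hφl, if_pos hb]
    rw [Finset.sum_congr rfl hfib, ← Finset.sum_div, if_pos hb, vFa_sM c φ t,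
      simplexMap_apply]
  · have hfib : ∀ l ∈ Finset.univ.filter (fun l => φ l = j),
        (NF (c.comp φ) t).1 l = 0 := by
      intro l hl
      have hφl : φ l = j := by simpa using hl
      rw [NF_apply_of_ne _ _ hv l, cB_comp, hφl, if_neg hb]
    rw [Finset.sum_congr rfl hfib, Finset.sum_const_zero, if_neg hb]

end Chunk3

noncomputable section Chunk4

open unitInterval ContinuousMap

instance SPt.compactSpace (n : ℕ) : CompactSpace (SPt n) :=
  isCompact_iff_compactSpace.mp (isCompact_stdSimplex _ _)

lemma bool_ne_false {b : Bool} (h : ¬b = false) : b = true := by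
  cases b
  · exact absurd rfl h
  · rfl

/-- Continuity of an evaluated family which is constant at time `0`, despite the
evaluation point being possibly discontinuous at time `0` (tube lemma). -/
lemma continuous_eval_const_at_zero {B K Z P : Type*} [TopologicalSpace B]
    [TopologicalSpace K] [TopologicalSpace Z] [TopologicalSpace P] [CompactSpace K]
    [LocallyCompactSpace K]
    (G : C(B × I, C(K, Z))) (hconst : ∀ b (x x' : K), G (b, 0) x = G (b, 0) x')
    (α : P → B) (hα : Continuous α) (s : P → I) (hs : Continuous s)
    (N : P → K) (hN : ∀ p, s p ≠ 0 → ContinuousAt N p) :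
    Continuous fun p => G (α p, s p) (N p) := by
  rw [continuous_iff_continuousAt]
  intro p
  by_cases hsp : s p = 0
  · rw [ContinuousAt, _root_.tendsto_nhds]
    intro V hV hmem
    have hMaps : Set.MapsTo (G (α p, s p)) Set.univ V := by
      intro x _
      rw [hsp]
      rw [hsp] at hmem
      exact (hconst (α p) x (N p)) ▸ hmem
    have hopen := ContinuousMap.isOpen_setOf_mapsTo (isCompact_univ (X := K)) hV
    have hcont : Continuous fun q => G (α q, s q) :=
      G.continuous.comp (hα.prodMk hs)
    have hnh : {q | Set.MapsTo (G (α q, s q)) Set.univ V} ∈ nhds p :=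
      hcont.continuousAt.preimage_mem_nhds (hopen.mem_nhds hMaps)
    filter_upwards [hnh] with q hq
    exact hq (Set.mem_univ (N q))
  · have h1 : ContinuousAt (fun q => (G (α q, s q), N q)) p :=
      ((G.continuous.comp (hα.prodMk hs)).continuousAt).prodMk (hN p hsp)
    exact (ContinuousEval.continuous_eval.continuousAt).comp h1

end Chunk4

noncomputable section Chunk5

open unitInterval ContinuousMap

variable {ι : Type} {X Y : PCube ι}

lemma PD_map_map {P : Type*} [PartialOrder P] (D : PDiagram P) {p q r : P}
    (h1 : p ≤ q) (h2 : q ≤ r) (a : D.obj p) :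
    D.map h2 (D.map h1 a) = D.map (h1.trans h2) a := by
  rw [D.map_comp h1 h2]
  rfl

lemma Fnat_pt (F : CubeMap X Y) {S T : Set ι} (h : S ⊆ T) (x : X.obj S) :
    F.app T (X.map h x) = Y.map h (F.app S x) :=
  ContinuousMap.congr_fun (F.natural h) x

lemma cubeAMap_pt (Z : PCube ι) (z : Z.obj ∅) {n : ℕ} (c : Fin (n + 1) →o NESet ι)
    (t : SPt n) : ((cubeAMap Z z).1 n c) t = Z.map (Set.empty_subset _) z := rfl

lemma pushF_pt (F : CubeMap X Y) (w : Holim (X.pull (NESet.incl ι))) {n : ℕ}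
    (c : Fin (n + 1) →o NESet ι) (t : SPt n) :
    ((pushF F w).1 n c) t = F.app _ ((w.1 n c) t) := rfl

/-- A chain all of whose entries are `false`, as a chain of nonempty sets. -/
def toNE {n : ℕ} (c : Fin (n + 1) →o TPunct ι) (hl : cB c (Fin.last n) = false) :
    Fin (n + 1) →o NESet ι where
  toFun j := ⟨(c j).1.1,
    TPunct_nonempty_of_false _ (bool_le_false (cB_mono c (Fin.le_last j)) hl)⟩
  monotone' a b h := (c.monotone h).1

/-- Triples `(z, y, δ)` where `δ` is a path from the constant point at `y` to the
pushforward of `z`. -/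
def ZYD (F : CubeMap X Y) : Type _ :=
  { p : Holim (X.pull (NESet.incl ι)) ×
      (Y.obj (∅ : Set ι) × C(I, Holim (Y.pull (NESet.incl ι)))) //
    p.2.2 0 = cubeAMap Y p.2.1 ∧ p.2.2 1 = pushF F p.1 }

instance (F : CubeMap X Y) : TopologicalSpace (ZYD F) := by
  unfold ZYD; infer_instance

/-- The raw values of the glued point of the total homotopy limit. -/
def Wraw (F : CubeMap X Y) {n : ℕ} (c : Fin (n + 1) →o TPunct ι)
    (p : Holim (X.pull (NESet.incl ι)) ×
      (Y.obj (∅ : Set ι) × C(I, Holim (Y.pull (NESet.incl ι)))))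
    (t : SPt n) : F.tdiag.obj ((c (Fin.last n)).1) :=
  if hl : cB c (Fin.last n) = false then
    XtoT F hl ((p.1.1 n (toNE c hl)) t)
  else if h0 : cB c 0 = false then
    YtoT F (bool_ne_false hl)
      (Y.map ((c.monotone (min_le_left (Fin.last n) (iF c h0))).1)
        (((p.2.2 (vI c t)).1 n (cCl c h0)) (NF c t)))
  else
    YtoT F (bool_ne_false hl) (Y.map (Set.empty_subset _) p.2.1)

lemma NF_continuousAt {n : ℕ} (c : Fin (n + 1) →o TPunct ι) (t0 : SPt n)
    (hv : vFa c t0 ≠ 0) : ContinuousAt (NF c) t0 := by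
  rw [(Topology.IsInducing.subtypeVal).continuousAt_iff]
  have hopen : IsOpen {t : SPt n | vFa c t ≠ 0} :=
    isOpen_compl_iff.mpr (isClosed_eq (continuous_vFa c) continuous_const)
  have hev : (fun t => (NF c t : Fin (n + 1) → ℝ)) =ᶠ[nhds t0]
      (fun t j => if cB c j = false then t.1 j / vFa c t else 0) := by
    filter_upwards [hopen.mem_nhds hv] with t ht
    funext j
    rw [show (NF c t : Fin (n + 1) → ℝ) = _ from congrArg _ (dif_neg ht)]
    rfl
  refine ContinuousAt.congr ?_ hev.symm
  rw [continuousAt_pi]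
  intro j
  by_cases hb : cB c j = false
  · simp only [if_pos hb]
    exact ((continuous_apply j).comp continuous_subtype_val).continuousAt.div
      (continuous_vFa c).continuousAt hv
  · simp only [if_neg hb]
    exact continuousAt_const

lemma Wraw_cont (F : CubeMap X Y) {n : ℕ} (c : Fin (n + 1) →o TPunct ι) :
    Continuous (fun q : ZYD F × SPt n => Wraw F c q.1.1 q.2) := by
  unfold Wraw
  have hz : Continuous fun q : ZYD F × SPt n => q.1.1.1 :=
    continuous_fst.comp (continuous_subtype_val.comp continuous_fst)
  have hy : Continuous fun q : ZYD F × SPt n => q.1.1.2.1 :=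
    continuous_fst.comp (continuous_snd.comp
      (continuous_subtype_val.comp continuous_fst))
  by_cases hl : cB c (Fin.last n) = false
  · simp only [dif_pos hl]
    refine (XtoT F hl).continuous.comp ?_
    refine ContinuousEval.continuous_eval.comp (Continuous.prodMk ?_ continuous_snd)
    exact ((continuous_apply (toNE c hl)).comp ((continuous_apply n).comp
      continuous_subtype_val)).comp hz
  · simp only [dif_neg hl]
    by_cases h0 : cB c 0 = false
    · simp only [dif_pos h0]
      have h1 : Continuous fun b : ZYD F × I => b.1.1.2.2 b.2 := by
        refine ContinuousEval.continuous_eval.comp (Continuous.prodMk ?_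
          continuous_snd)
        exact continuous_snd.comp (continuous_snd.comp
          (continuous_subtype_val.comp continuous_fst))
      have h2 : Continuous fun b : ZYD F × I => (b.1.1.2.2 b.2).1 :=
        continuous_subtype_val.comp h1
      have h3 : Continuous fun b : ZYD F × I => (b.1.1.2.2 b.2).1 n :=
        (continuous_apply n).comp h2
      have hGc : Continuous fun b : ZYD F × I => (b.1.1.2.2 b.2).1 n (cCl c h0) :=
        (continuous_apply (cCl c h0)).comp h3
      have hconst : ∀ (b : ZYD F) (x x' : SPt n),
          (ContinuousMap.mk _ hGc) (b, 0) x = (ContinuousMap.mk _ hGc) (b, 0) x' := by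
        intro b x x'
        show ((b.1.2.2 0).1 n (cCl c h0)) x = ((b.1.2.2 0).1 n (cCl c h0)) x'
        rw [b.2.1]
        rfl
      have hNloc : ∀ q : ZYD F × SPt n, (fun q : ZYD F × SPt n => vI c q.2) q ≠ 0 →
          ContinuousAt (fun q : ZYD F × SPt n => NF c q.2) q := by
        intro q hq
        have hv : vFa c q.2 ≠ 0 := fun h => hq (Subtype.ext h)
        exact (NF_continuousAt c q.2 hv).comp continuous_snd.continuousAt
      have key := continuous_eval_const_at_zero (P := ZYD F × SPt n)
        (ContinuousMap.mk _ hGc) hconst Prod.fst continuous_fst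
        (fun q => vI c q.2) ((continuous_vI c).comp continuous_snd)
        (fun q => NF c q.2) hNloc
      exact (YtoT F (bool_ne_false hl)).continuous.comp
        ((Y.map _).continuous.comp key)
    · simp only [dif_neg h0]
      exact (YtoT F (bool_ne_false hl)).continuous.comp ((Y.map _).continuous.comp hy)
end Chunk5

noncomputable section Chunk6

open unitInterval ContinuousMap

variable {ι : Type} {X Y : PCube ι}

lemma NF_eq_self {n : ℕ} (c : Fin (n + 1) →o TPunct ι) (t : SPt n)
    (hv : vFa c t = 1) (hzero : ∀ j, cB c j = true → t.1 j = 0) : NF c t = t := by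
  have hne : vFa c t ≠ 0 := by rw [hv]; norm_num
  apply Subtype.ext
  funext j
  rw [NF_apply_of_ne c t hne j]
  by_cases hb : cB c j = false
  · rw [if_pos hb, hv, div_one]
  · rw [if_neg hb, eq_comm]
    exact hzero j (bool_ne_false hb)

lemma PD2_eq_PD1 {P : Type*} [PartialOrder P] (D : PDiagram P) {p q r : P}
    (h1 : p ≤ q) (h2 : q ≤ r) (h3 : p ≤ r) (a : D.obj p) :
    D.map h2 (D.map h1 a) = D.map h3 a := by
  rw [PD_map_map]

lemma PD2_eq_PD2 {P : Type*} [PartialOrder P] (D : PDiagram P) {p q r q2 : P}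
    (h1 : p ≤ q) (h2 : q ≤ r) (h3 : p ≤ q2) (h4 : q2 ≤ r) (a : D.obj p) :
    D.map h2 (D.map h1 a) = D.map h4 (D.map h3 a) := by
  rw [PD_map_map, PD_map_map]

lemma PD3_eq_PD2 {P : Type*} [PartialOrder P] (D : PDiagram P) {p q r s q2 : P}
    (h1 : p ≤ q) (h2 : q ≤ r) (h3 : r ≤ s) (h4 : p ≤ q2) (h5 : q2 ≤ s)
    (a : D.obj p) :
    D.map h3 (D.map h2 (D.map h1 a)) = D.map h5 (D.map h4 a) := by
  rw [PD_map_map, PD_map_map, PD_map_map]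

lemma holim_chain_congr {P : Type*} [PartialOrder P] {D : PDiagram P} (f : Holim D)
    {n : ℕ} {C C' : Fin (n + 1) →o P} (h : C = C') (x : SPt n) {r : P}
    (hC : C (Fin.last n) ≤ r) (hC' : C' (Fin.last n) ≤ r) :
    D.map hC (f.1 n C x) = D.map hC' (f.1 n C' x) := by
  subst h
  rfl

lemma Wraw_coh (F : CubeMap X Y)
    (p : Holim (X.pull (NESet.incl ι)) ×
      (Y.obj (∅ : Set ι) × C(I, Holim (Y.pull (NESet.incl ι)))))
    (h1 : p.2.2 0 = cubeAMap Y p.2.1) (h2 : p.2.2 1 = pushF F p.1)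
    (m n : ℕ) (c : Fin (n + 1) →o TPunct ι) (φ : Fin (m + 1) →o Fin (n + 1))
    (t : SPt m) :
    F.tdiag.map (c.monotone (Fin.le_last (φ (Fin.last m))))
        (Wraw F (c.comp φ) p t) =
      Wraw F c p (simplexMap φ t) := by
  unfold Wraw
  by_cases hl : cB c (Fin.last n) = false
  · -- the whole chain is false
    have hφl : cB (c.comp φ) (Fin.last m) = false :=
      bool_le_false (cB_mono c (Fin.le_last (φ (Fin.last m)))) hl
    rw [dif_pos hφl, dif_pos hl]
    refine Eq.trans (tmap_ff F (c.monotone (Fin.le_last (φ (Fin.last m)))) hφl hl _) ?_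
    refine congrArg _ ?_
    exact ContinuousMap.congr_fun (p.1.2 m n (toNE c hl) φ) t
  · have hlt : cB c (Fin.last n) = true := bool_ne_false hl
    by_cases hφl : cB (c.comp φ) (Fin.last m) = false
    · -- the restricted chain is all false, the big chain is mixed
      have h0 : cB c 0 = false :=
        bool_le_false (cB_mono c (Fin.zero_le (φ (Fin.last m)))) hφl
      have hall : ∀ l, cB (c.comp φ) l = false := fun l =>
        bool_le_false (cB_mono (c.comp φ) (Fin.le_last l)) hφl
      rw [dif_pos hφl, dif_neg hl, dif_pos h0]
      have hv1 : vFa (c.comp φ) t = 1 := by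
        unfold vFa
        rw [show Fa (c.comp φ) = Finset.univ from
          Finset.filter_true_of_mem (fun l _ => hall l), t.2.2]
      have hvI : vI c (simplexMap φ t) = 1 := by
        rw [vI_sM c φ t]
        exact Subtype.ext hv1
      have hzero : ∀ j, cB c j = true → (simplexMap φ t).1 j = 0 := by
        intro j hj
        rw [simplexMap_apply]
        apply Finset.sum_eq_zero
        intro l hlmem
        exfalso
        have hfl : φ l = j := by simpa using hlmem
        have hfalse := hall l
        rw [cB_comp, hfl, hj] at hfalse
        exact Bool.noConfusion hfalse
      have hNF : NF c (simplexMap φ t) = simplexMap φ t :=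
        NF_eq_self c _ (by rw [vFa_sM c φ t]; exact hv1) hzero
      have hchain : (cCl c h0).comp φ = toNE (c.comp φ) hφl := by
        apply OrderHom.ext
        funext l
        apply Subtype.ext
        show (c (min (φ l) (iF c h0))).1.1 = (c (φ l)).1.1
        rw [min_eq_left ((le_iF_iff c h0 (φ l)).2 (hall l))]
      have hz : X.map ((cCl c h0).monotone (Fin.le_last (φ (Fin.last m))))
          ((p.1.1 m ((cCl c h0).comp φ)) t)
          = (p.1.1 n (cCl c h0)) (simplexMap φ t) :=
        ContinuousMap.congr_fun (p.1.2 m n (cCl c h0) φ) t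
      have hC' : (toNE (c.comp φ) hφl) (Fin.last m) ≤ (cCl c h0) (Fin.last n) :=
        (c.monotone (le_min (Fin.le_last (φ (Fin.last m)))
          ((le_iF_iff c h0 (φ (Fin.last m))).2 (hall (Fin.last m))))).1
      have hz' : X.map hC' ((p.1.1 m (toNE (c.comp φ) hφl)) t)
          = (p.1.1 n (cCl c h0)) (simplexMap φ t) :=
        Eq.trans (holim_chain_congr p.1 hchain t
          ((cCl c h0).monotone (Fin.le_last (φ (Fin.last m)))) hC').symm hz
      refine Eq.trans (tmap_ft F (c.monotone (Fin.le_last (φ (Fin.last m)))) hφl hlt _) ?_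
      refine congrArg _ ?_
      have eA : ((p.2.2 (vI c (simplexMap φ t))).1 n (cCl c h0)) (NF c (simplexMap φ t))
          = F.app _ ((p.1.1 n (cCl c h0)) (simplexMap φ t)) := by
        rw [hvI, h2, hNF]
        rfl
      refine Eq.trans ?_ (congrArg _ eA.symm)
      refine Eq.trans ?_ (congrArg _ (congrArg _ hz'))
      have eB := Fnat_pt F hC' ((p.1.1 m (toNE (c.comp φ) hφl)) t)
      refine Eq.trans ?_ (congrArg _ eB.symm)
      exact (PD2_eq_PD1 Y _ _ _ _).symm
    · have hφlt : cB (c.comp φ) (Fin.last m) = true := bool_ne_false hφl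
      by_cases hφ0 : cB (c.comp φ) 0 = false
      · -- both chains are mixed
        have h0 : cB c 0 = false :=
          bool_le_false (cB_mono c (Fin.zero_le (φ 0))) hφ0
        rw [dif_neg hφl, dif_pos hφ0, dif_neg hl, dif_pos h0]
        refine Eq.trans
          (tmap_tt F (c.monotone (Fin.le_last (φ (Fin.last m)))) hφlt hlt _) ?_
        refine congrArg _ ?_
        rw [vI_sM c φ t]
        by_cases hv : vFa (c.comp φ) t = 0
        · -- zero mass: everything is constant
          rw [show vI (c.comp φ) t = 0 from Subtype.ext hv, h1, cubeAMap_pt,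
            cubeAMap_pt]
          exact PD3_eq_PD2 Y _ _ _ _ _ _
        · -- positive mass: renormalizations are compatible
          rw [NF_sM c φ t hv]
          have hφle : ∀ l : Fin (m + 1),
              φ l ≤ iF c h0 ↔ l ≤ iF (c.comp φ) hφ0 := fun l =>
            (le_iF_iff c h0 (φ l)).trans (le_iF_iff (c.comp φ) hφ0 l).symm
          have hx : ∀ l, ¬l ≤ iF (c.comp φ) hφ0 → (NF (c.comp φ) t).1 l = 0 := by
            intro l hle
            apply NF_zero_of_true (c.comp φ) hφ0
            cases hcb : cB (c.comp φ) l
            · exact absurd ((le_iF_iff (c.comp φ) hφ0 l).2 hcb) hle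
            · rfl
          have hsmk := sM_clamp_eq (iF (c.comp φ) hφ0) (NF (c.comp φ) t) hx
          have hchain : ((cCl c h0).comp φ).comp (clampOH (iF (c.comp φ) hφ0))
              = cCl (c.comp φ) hφ0 := by
            apply OrderHom.ext
            funext l
            apply Subtype.ext
            show (c (min (φ (min l (iF (c.comp φ) hφ0))) (iF c h0))).1.1
              = (c (φ (min l (iF (c.comp φ) hφ0)))).1.1
            rw [min_eq_left ((hφle _).2 (min_le_right l (iF (c.comp φ) hφ0)))]
          have e2 : (p.2.2 (vI (c.comp φ) t)).1 n (cCl c h0)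
                (simplexMap φ (NF (c.comp φ) t))
              = Y.map ((cCl c h0).monotone (Fin.le_last (φ (Fin.last m))))
                ((p.2.2 (vI (c.comp φ) t)).1 m ((cCl c h0).comp φ)
                  (NF (c.comp φ) t)) :=
            (ContinuousMap.congr_fun
              ((p.2.2 (vI (c.comp φ) t)).2 m n (cCl c h0) φ) (NF (c.comp φ) t)).symm
          rw [e2]
          have e3 : (p.2.2 (vI (c.comp φ) t)).1 m ((cCl c h0).comp φ)
                (NF (c.comp φ) t)
              = Y.map (c.monotone (le_min
                  (φ.monotone (min_le_left (Fin.last m) (iF (c.comp φ) hφ0)))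
                  ((hφle (min (Fin.last m) (iF (c.comp φ) hφ0))).2
                    (min_le_right (Fin.last m) (iF (c.comp φ) hφ0))))).1
                ((p.2.2 (vI (c.comp φ) t)).1 m (cCl (c.comp φ) hφ0)
                  (NF (c.comp φ) t)) := by
            have h4 := ContinuousMap.congr_fun
              ((p.2.2 (vI (c.comp φ) t)).2 m m ((cCl c h0).comp φ)
                (clampOH (iF (c.comp φ) hφ0))) (NF (c.comp φ) t)
            simp only [ContinuousMap.comp_apply] at h4
            rw [hsmk] at h4
            refine Eq.trans h4.symm ?_
            exact holim_chain_congr (p.2.2 (vI (c.comp φ) t)) hchain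
              (NF (c.comp φ) t) _
              (c.monotone (le_min
                (φ.monotone (min_le_left (Fin.last m) (iF (c.comp φ) hφ0)))
                ((hφle (min (Fin.last m) (iF (c.comp φ) hφ0))).2
                  (min_le_right (Fin.last m) (iF (c.comp φ) hφ0))))).1
          rw [e3]
          exact (PD3_eq_PD2 Y _ _ _ _ _ _).symm
      · -- the restricted chain is all true
        have hφall : ∀ l, cB (c.comp φ) l = true := fun l =>
          bool_true_le (cB_mono (c.comp φ) (Fin.zero_le l)) (bool_ne_false hφ0)
        rw [dif_neg hφl, dif_neg hφ0, dif_neg hl]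
        have hv0 : vFa (c.comp φ) t = 0 := by
          unfold vFa
          rw [show Fa (c.comp φ) = ∅ from ?_, Finset.sum_empty]
          apply Finset.filter_eq_empty_iff.2
          intro l _
          rw [hφall l]
          exact Bool.noConfusion
        by_cases h0 : cB c 0 = false
        · -- ambient chain is mixed
          rw [dif_pos h0]
          refine Eq.trans
            (tmap_tt F (c.monotone (Fin.le_last (φ (Fin.last m)))) hφlt hlt _) ?_
          refine congrArg _ ?_
          have hvI : vI c (simplexMap φ t) = 0 := by
            rw [vI_sM c φ t]
            exact Subtype.ext hv0
          rw [hvI, h1, cubeAMap_pt]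
          exact PD2_eq_PD2 Y _ _ _ _ _
        · -- ambient chain is all true
          rw [dif_neg h0]
          refine Eq.trans
            (tmap_tt F (c.monotone (Fin.le_last (φ (Fin.last m)))) hφlt hlt _) ?_
          refine congrArg _ ?_
          exact PD2_eq_PD1 Y _ _ _ _

end Chunk6

noncomputable section Chunk7

open unitInterval ContinuousMap

variable {ι : Type} {X Y : PCube ι}

/-- The components of the glued point, as a continuous family. -/
def WelCM (F : CubeMap X Y) {n : ℕ} (c : Fin (n + 1) →o TPunct ι) :
    C(ZYD F, C(SPt n, F.tdiag.obj ((c (Fin.last n)).1))) :=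
  ContinuousMap.curry ⟨fun qt : ZYD F × SPt n => Wraw F c qt.1.1 qt.2, Wraw_cont F c⟩

/-- The gluing construction: from a triple `(z, y, δ)` to a point of the total
punctured homotopy limit. -/
def Wel (F : CubeMap X Y) : C(ZYD F, Holim (F.tdiag.pull (TPunct.incl ι))) where
  toFun q := ⟨fun n c => WelCM F c q, by
    intro m n c φ
    ext t
    exact Wraw_coh F q.1 q.2.1 q.2.2 m n c φ t⟩
  continuous_toFun := by
    apply Continuous.subtype_mk
    exact continuous_pi fun n => continuous_pi fun c => (WelCM F c).continuous

lemma res_Wel (F : CubeMap X Y) (q : ZYD F) : resTP F (Wel F q) = q.1.1 := by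
  apply Subtype.ext
  funext n c
  ext t
  show Wraw F (toTP c) q.1 t = (q.1.1.1 n c) t
  rfl

lemma tmap_init_f (F : CubeMap X Y) {q : Set ι × Bool}
    (h : ((∅ : Set ι), false) ≤ q) (hq : q.2 = false) (x : X.obj ∅) :
    F.tdiag.map h x = XtoT F hq (X.map h.1 x) := by
  rcases q with ⟨T, b⟩
  cases b
  · rfl
  · exact absurd hq (by simp)

lemma tmap_init_t (F : CubeMap X Y) {q : Set ι × Bool}
    (h : ((∅ : Set ι), false) ≤ q) (hq : q.2 = true) (x : X.obj ∅) :
    F.tdiag.map h x = YtoT F hq (Y.map h.1 (F.app ∅ x)) := by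
  rcases q with ⟨T, b⟩
  cases b
  · exact absurd hq (by simp)
  · rfl

/-- The canonical triple associated to a point of `X ∅`. -/
def constZYD (F : CubeMap X Y) : C(X.obj (∅ : Set ι), ZYD F) where
  toFun x := ⟨(cubeAMap X x, F.app ∅ x,
      ContinuousMap.const I (cubeAMap Y (F.app ∅ x))), by
    constructor
    · rfl
    · show cubeAMap Y (F.app ∅ x) = pushF F (cubeAMap X x)
      rw [pushF_aMap]⟩
  continuous_toFun := by
    apply Continuous.subtype_mk
    refine Continuous.prodMk (cubeAMap X).continuous (Continuous.prodMk
      (F.app ∅).continuous ?_)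
    exact ContinuousMap.const'.continuous.comp
      ((cubeAMap Y).continuous.comp (F.app ∅).continuous)

lemma Wel_const (F : CubeMap X Y) (x : X.obj (∅ : Set ι)) :
    Wel F (constZYD F x) = F.aMapT x := by
  apply Subtype.ext
  funext n c
  ext t
  show Wraw F c (constZYD F x).1 t
    = F.tdiag.map (⟨Set.empty_subset _, Bool.false_le _⟩ :
        ((∅, false) : Set ι × Bool) ≤ ((c (Fin.last n)).1 : Set ι × Bool)) x
  unfold Wraw
  by_cases hl : cB c (Fin.last n) = false
  · rw [dif_pos hl, tmap_init_f F _ hl]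
    rfl
  · rw [tmap_init_t F _ (bool_ne_false hl)]
    by_cases h0 : cB c 0 = false
    · rw [dif_neg hl, dif_pos h0]
      refine congrArg _ ?_
      exact PD2_eq_PD1 Y _ _ _ _
    · rw [dif_neg hl, dif_neg h0]
      rfl

end Chunk7

noncomputable section Chunk8

open unitInterval ContinuousMap Metric

/-- Clamp a real number into the unit interval. -/
def cmI (r : ℝ) : I := Set.projIcc 0 1 zero_le_one r

lemma continuous_cmI : Continuous cmI := continuous_projIcc (h := zero_le_one)

lemma cmI_le_zero {r : ℝ} (h : r ≤ 0) : cmI r = 0 := by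
  apply Subtype.ext
  show max 0 (min 1 r) = 0
  exact max_eq_left (le_trans (min_le_right 1 r) h)

lemma cmI_ge_one {r : ℝ} (h : 1 ≤ r) : cmI r = 1 := by
  apply Subtype.ext
  show max 0 (min 1 r) = 1
  rw [min_eq_left h]
  exact max_eq_right zero_le_one

lemma cmI_zero : cmI 0 = 0 := cmI_le_zero le_rfl

lemma cmI_one : cmI 1 = 1 := cmI_ge_one le_rfl

lemma cmI_coe (t : I) : cmI (t : ℝ) = t := by
  apply Subtype.ext
  show max 0 (min 1 (t : ℝ)) = t
  rw [min_eq_right t.2.2, max_eq_right t.2.1]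

/-- Concatenation of two families of paths. -/
def concatF {A Z : Type*} [TopologicalSpace A] [TopologicalSpace Z]
    (f g : C(A × I, Z)) (hfg : ∀ a, f (a, 1) = g (a, 0)) : C(A × I, Z) where
  toFun p := if ((p.2 : ℝ)) ≤ 1 / 2 then f (p.1, cmI (2 * p.2)) else
    g (p.1, cmI (2 * p.2 - 1))
  continuous_toFun := by
    refine Continuous.if_le ?_ ?_ (continuous_subtype_val.comp continuous_snd)
      continuous_const ?_
    · exact f.continuous.comp (continuous_fst.prodMk (continuous_cmI.comp
        (continuous_const.mul (continuous_subtype_val.comp continuous_snd))))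
    · exact g.continuous.comp (continuous_fst.prodMk (continuous_cmI.comp
        ((continuous_const.mul (continuous_subtype_val.comp continuous_snd)).sub
          continuous_const)))
    · intro p hp
      have h1 : cmI (2 * ((p.2 : ℝ))) = 1 := by
        rw [hp, show (2 : ℝ) * (1 / 2) = 1 by norm_num, cmI_one]
      have h2 : cmI (2 * ((p.2 : ℝ)) - 1) = 0 := by
        rw [hp, show (2 : ℝ) * (1 / 2) - 1 = 0 by norm_num, cmI_zero]
      rw [h1, h2]
      exact hfg p.1

lemma concatF_zero {A Z : Type*} [TopologicalSpace A] [TopologicalSpace Z]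
    (f g : C(A × I, Z)) (hfg : ∀ a, f (a, 1) = g (a, 0)) (a : A) :
    concatF f g hfg (a, 0) = f (a, 0) := by
  show (if ((0 : I) : ℝ) ≤ 1 / 2 then _ else _) = _
  rw [if_pos (by norm_num)]
  norm_num [cmI_zero]

lemma concatF_one {A Z : Type*} [TopologicalSpace A] [TopologicalSpace Z]
    (f g : C(A × I, Z)) (hfg : ∀ a, f (a, 1) = g (a, 0)) (a : A) :
    concatF f g hfg (a, 1) = g (a, 1) := by
  show (if ((1 : I) : ℝ) ≤ 1 / 2 then _ else _) = _
  rw [if_neg (by norm_num)]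
  norm_num [cmI_one]

lemma concatF_post {A Z Z' : Type*} [TopologicalSpace A] [TopologicalSpace Z]
    [TopologicalSpace Z'] (f g : C(A × I, Z)) (hfg : ∀ a, f (a, 1) = g (a, 0))
    (ρ : C(Z, Z')) (p : A × I) :
    ρ (concatF f g hfg p) = concatF (ρ.comp f) (ρ.comp g)
      (fun a => congrArg ρ (hfg a)) p := by
  show ρ (if ((p.2 : ℝ)) ≤ 1 / 2 then _ else _) = if ((p.2 : ℝ)) ≤ 1 / 2 then _ else _
  split <;> rfl

/-- Gluing a disk map to a homotopy along a boundary collar. -/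
lemma glue_extension {j : ℕ} {Z : Type*} [TopologicalSpace Z]
    (φ : C(USphere j, Z)) (Ψ : C(UDisk j, Z)) (H : C(USphere j × I, Z))
    (hH1 : ∀ ξ : USphere j, H (ξ, 1) = Ψ ⟨ξ.1, sphere_subset_closedBall ξ.2⟩)
    (hH0 : ∀ ξ : USphere j, H (ξ, 0) = φ ξ) :
    ∃ ψ : C(UDisk j, Z), ∀ x : USphere j, ψ ⟨x.1, sphere_subset_closedBall x.2⟩ = φ x := by
  classical
  -- the doubling map
  have hmax_pos : ∀ d : UDisk j, (0 : ℝ) < max 1 (2 * ‖d.1‖) := fun d =>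
    lt_max_of_lt_left zero_lt_one
  have hdbl_mem : ∀ d : UDisk j,
      ((2 / max 1 (2 * ‖d.1‖)) • d.1) ∈ closedBall (0 : EuclideanSpace ℝ (Fin (j+1))) 1 := by
    intro d
    rw [mem_closedBall_zero_iff, norm_smul, Real.norm_eq_abs,
      abs_of_pos (div_pos two_pos (hmax_pos d))]
    rw [div_mul_eq_mul_div, div_le_one (hmax_pos d)]
    rcases le_total (2 * ‖d.1‖) 1 with h | h
    · calc 2 * ‖d.1‖ ≤ 1 := h
        _ ≤ max 1 (2 * ‖d.1‖) := le_max_left _ _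
    · exact le_max_right _ _
  let dbl : UDisk j → UDisk j := fun d => ⟨(2 / max 1 (2 * ‖d.1‖)) • d.1, hdbl_mem d⟩
  have hdbl_cont : Continuous dbl := by
    apply Continuous.subtype_mk
    exact (continuous_const.div
      (continuous_const.max (continuous_const.mul
        (continuous_norm.comp continuous_subtype_val)))
      (fun d => (hmax_pos d).ne')).smul continuous_subtype_val
  -- inner and outer functions
  let finn : UDisk j → Z := fun d => Ψ (dbl d)
  let gout : UDisk j → Z := fun d =>
    if hd : d.1 = 0 then Ψ (dbl d)
    else H (⟨‖d.1‖⁻¹ • d.1, by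
      rw [mem_sphere_zero_iff_norm, norm_smul, Real.norm_eq_abs,
        abs_of_pos (inv_pos.2 (norm_pos_iff.2 hd)),
        inv_mul_cancel₀ (norm_ne_zero_iff.2 hd)]⟩,
      cmI (2 - 2 * ‖d.1‖))
  have hgout_eq : ∀ (d : UDisk j) (hd : d.1 ≠ 0),
      gout d = H (⟨‖d.1‖⁻¹ • d.1, by
        rw [mem_sphere_zero_iff_norm, norm_smul, Real.norm_eq_abs,
          abs_of_pos (inv_pos.2 (norm_pos_iff.2 hd)),
          inv_mul_cancel₀ (norm_ne_zero_iff.2 hd)]⟩,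
        cmI (2 - 2 * ‖d.1‖)) := by
    intro d hd
    simp only [gout, dif_neg hd]
  set s : Set (UDisk j) := {d | ‖d.1‖ ≤ 1 / 2} with hs
  have hfin_cont : Continuous finn := Ψ.continuous.comp hdbl_cont
  have hgout_on : ContinuousOn gout {d : UDisk j | 1 / 2 ≤ ‖d.1‖} := by
    rw [continuousOn_iff_continuous_restrict]
    have : Set.domRestrict {d : UDisk j | 1 / 2 ≤ ‖d.1‖} gout = fun e =>
        H (⟨‖e.1.1‖⁻¹ • e.1.1, by
          have hne : e.1.1 ≠ 0 := by
            intro h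
            have := e.2
            rw [Set.mem_setOf_eq, h] at this
            simp at this
            linarith
          rw [mem_sphere_zero_iff_norm, norm_smul, Real.norm_eq_abs,
            abs_of_pos (inv_pos.2 (norm_pos_iff.2 hne)),
            inv_mul_cancel₀ (norm_ne_zero_iff.2 hne)]⟩,
        cmI (2 - 2 * ‖e.1.1‖)) := by
      funext e
      have hne : e.1.1 ≠ 0 := by
        intro h
        have := e.2
        rw [Set.mem_setOf_eq, h] at this
        simp at this
        linarith
      exact hgout_eq e.1 hne
    rw [this]
    have hvalcont : Continuous fun e : {d : UDisk j // d ∈ {d : UDisk j | 1 / 2 ≤ ‖d.1‖}} =>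
        e.1.1 := continuous_subtype_val.comp continuous_subtype_val
    have hnormne : ∀ e : {d : UDisk j // d ∈ {d : UDisk j | 1 / 2 ≤ ‖d.1‖}},
        ‖e.1.1‖ ≠ 0 := by
      intro e
      have := e.2
      rw [Set.mem_setOf_eq] at this
      positivity
    refine H.continuous.comp (Continuous.prodMk ?_ ?_)
    · exact Continuous.subtype_mk
        (((hvalcont.norm).inv₀ hnormne).smul hvalcont) _
    · exact continuous_cmI.comp
        (continuous_const.sub (continuous_const.mul hvalcont.norm))
  have hfrontier : ∀ d ∈ frontier s, finn d = gout d := by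
    intro d hd
    have heq : ‖d.1‖ = 1 / 2 := by
      have := frontier_le_subset_eq (continuous_norm.comp continuous_subtype_val)
        continuous_const hd
      exact this
    have hdne : d.1 ≠ 0 := by
      intro h
      rw [h] at heq
      simp at heq
    rw [hgout_eq d hdne]
    have h1 : (2 : ℝ) / max 1 (2 * ‖d.1‖) = 2 := by
      rw [heq]
      norm_num
    have h2 : ‖d.1‖⁻¹ = 2 := by rw [heq]; norm_num
    have h3 : cmI (2 - 2 * ‖d.1‖) = 1 := by
      rw [heq]
      norm_num [cmI_one]
    rw [h3, hH1]
    show Ψ (dbl d) = _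
    refine congrArg Ψ (Subtype.ext ?_)
    show (2 / max 1 (2 * ‖d.1‖)) • d.1 = ‖d.1‖⁻¹ • d.1
    rw [h1, h2]
  have hclos : closure sᶜ ⊆ {d : UDisk j | 1 / 2 ≤ ‖d.1‖} := by
    have hsub : sᶜ ⊆ {d : UDisk j | 1 / 2 ≤ ‖d.1‖} := fun e he => by
      rw [Set.mem_setOf_eq]
      rw [Set.mem_compl_iff, hs, Set.mem_setOf_eq] at he
      exact le_of_not_ge he
    have hcl : IsClosed {d : UDisk j | 1 / 2 ≤ ‖d.1‖} :=
      isClosed_le continuous_const (continuous_norm.comp continuous_subtype_val)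
    calc closure sᶜ ⊆ closure {d : UDisk j | 1 / 2 ≤ ‖d.1‖} := closure_mono hsub
      _ = {d : UDisk j | 1 / 2 ≤ ‖d.1‖} := hcl.closure_eq
  refine ⟨⟨s.piecewise finn gout, continuous_piecewise hfrontier
    hfin_cont.continuousOn (hgout_on.mono hclos)⟩, ?_⟩
  intro x
  have hx1 : ‖x.1‖ = 1 := mem_sphere_zero_iff_norm.1 x.2
  have hxs : (⟨x.1, sphere_subset_closedBall x.2⟩ : UDisk j) ∉ s := by
    rw [hs, Set.mem_setOf_eq]
    push_neg
    rw [show ‖((⟨x.1, sphere_subset_closedBall x.2⟩ : UDisk j)).1‖ = 1 from hx1]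
    norm_num
  show s.piecewise finn gout _ = φ x
  rw [Set.piecewise_eq_of_notMem _ _ _ hxs]
  have hdne : (⟨x.1, sphere_subset_closedBall x.2⟩ : UDisk j).1 ≠ 0 := by
    show x.1 ≠ 0
    intro h
    rw [h] at hx1
    simp at hx1
  rw [hgout_eq _ hdne]
  have hcm : cmI (2 - 2 * ‖((⟨x.1, sphere_subset_closedBall x.2⟩ : UDisk j)).1‖) = 0 := by
    rw [show ‖((⟨x.1, sphere_subset_closedBall x.2⟩ : UDisk j)).1‖ = 1 from hx1]
    rw [show (2 : ℝ) - 2 * 1 = 0 by norm_num, cmI_zero]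
  have hpt : (⟨‖((⟨x.1, sphere_subset_closedBall x.2⟩ : UDisk j)).1‖⁻¹
      • ((⟨x.1, sphere_subset_closedBall x.2⟩ : UDisk j)).1, by
        rw [mem_sphere_zero_iff_norm, norm_smul, Real.norm_eq_abs,
          abs_of_pos (inv_pos.2 (norm_pos_iff.2 hdne)),
          inv_mul_cancel₀ (norm_ne_zero_iff.2 hdne)]⟩ : USphere j) = x := by
    apply Subtype.ext
    show ‖x.1‖⁻¹ • x.1 = x.1
    rw [hx1]
    norm_num
  exact (congrArg H (Prod.ext hpt hcm)).trans (hH0 x)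

end Chunk8

noncomputable section Chunk9

open unitInterval ContinuousMap Metric

variable {ι : Type} {X Y : PCube ι}

/-- Main argument, extracted: `X` is `k`-cartesian. -/
lemma main_cartesian (k : ℤ) (F : CubeMap X Y) (hY : IsCartesianC k Y)
    (hF : F.IsCartesian k) : IsCartesianC k X := by
  intro z
  constructor
  · -- Nonemptiness
    intro hk
    obtain ⟨⟨⟨y, δ⟩, hδ0, hδ1⟩⟩ := (hY (pushF F z)).1 hk
    set w : Holim (F.tdiag.pull (TPunct.incl ι)) := Wel F ⟨(z, y, δ), ⟨hδ0, hδ1⟩⟩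
    obtain ⟨⟨⟨xh, η⟩, hη0, hη1⟩⟩ := (hF w).1 hk
    refine ⟨⟨(xh, (resTP F).comp η), ?_, ?_⟩⟩
    · show resTP F (η 0) = cubeAMap X xh
      rw [hη0]
      exact res_aMapT F xh
    · show resTP F (η 1) = z
      rw [hη1]
      exact res_Wel F _
  · -- Sphere extensions
    intro j hj φ
    -- components of φ
    have hxc : Continuous fun ξ : USphere j => (φ ξ).1.1 :=
      continuous_fst.comp (continuous_subtype_val.comp φ.continuous)
    have hγc : Continuous fun ξ : USphere j => (φ ξ).1.2 :=
      continuous_snd.comp (continuous_subtype_val.comp φ.continuous)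
    -- the sphere in the homotopy fiber of `A_Y`
    have hζmem : ∀ ξ : USphere j,
        ((pushF F).comp (φ ξ).1.2) 0 = cubeAMap Y (F.app ∅ (φ ξ).1.1) ∧
        ((pushF F).comp (φ ξ).1.2) 1 = pushF F z := by
      intro ξ
      constructor
      · show pushF F ((φ ξ).1.2 0) = _
        rw [(φ ξ).2.1, pushF_aMap]
      · show pushF F ((φ ξ).1.2 1) = _
        rw [(φ ξ).2.2]
    set ζ : C(USphere j, HoFiber (cubeAMap Y) (pushF F z)) :=
      ⟨fun ξ => ⟨(F.app ∅ (φ ξ).1.1, (pushF F).comp (φ ξ).1.2), hζmem ξ⟩, by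
        apply Continuous.subtype_mk
        exact Continuous.prodMk ((F.app ∅).continuous.comp hxc)
          ((pushF F).continuous_postcomp.comp hγc)⟩ with hζ
    obtain ⟨ζhat, hζhat⟩ := (hY (pushF F z)).2 j hj ζ
    -- the disk of triples
    set Zd : C(UDisk j, ZYD F) :=
      ⟨fun d => ⟨(z, (ζhat d).1.1, (ζhat d).1.2), ⟨(ζhat d).2.1, (ζhat d).2.2⟩⟩, by
        apply Continuous.subtype_mk
        refine Continuous.prodMk continuous_const (Continuous.prodMk ?_ ?_)
        · exact continuous_fst.comp (continuous_subtype_val.comp ζhat.continuous)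
        · exact continuous_snd.comp (continuous_subtype_val.comp ζhat.continuous)⟩
      with hZd
    -- the lifted family over the sphere
    have htrcont : Continuous fun q : (USphere j × I) × I =>
        pushF F ((φ q.1.1).1.2 (cmI ((q.1.2 : ℝ) * (q.2 : ℝ)))) := by
      refine (pushF F).continuous.comp ?_
      refine ContinuousEval.continuous_eval.comp (Continuous.prodMk ?_ ?_)
      · exact hγc.comp (continuous_fst.comp continuous_fst)
      · exact continuous_cmI.comp
          (((continuous_subtype_val.comp (continuous_snd.comp continuous_fst))).mul
            (continuous_subtype_val.comp continuous_snd))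
    set trunc : C(USphere j × I, C(I, Holim (Y.pull (NESet.incl ι)))) :=
      ContinuousMap.curry ⟨_, htrcont⟩ with htr
    have hzydmem : ∀ p : USphere j × I,
        (trunc p) 0 = cubeAMap Y (F.app ∅ (φ p.1).1.1) ∧
        (trunc p) 1 = pushF F ((φ p.1).1.2 p.2) := by
      intro ⟨ξ, t⟩
      constructor
      · show pushF F ((φ ξ).1.2 (cmI ((t : ℝ) * ((0 : I) : ℝ)))) = _
        rw [show ((0 : I) : ℝ) = 0 from rfl, mul_zero, cmI_zero, (φ ξ).2.1,
          pushF_aMap]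
      · show pushF F ((φ ξ).1.2 (cmI ((t : ℝ) * ((1 : I) : ℝ)))) = _
        rw [show ((1 : I) : ℝ) = 1 from rfl, mul_one, cmI_coe]
    set zydF : C(USphere j × I, ZYD F) :=
      ⟨fun p => ⟨((φ p.1).1.2 p.2, F.app ∅ (φ p.1).1.1, trunc p), hzydmem p⟩, by
        apply Continuous.subtype_mk
        refine Continuous.prodMk ?_ (Continuous.prodMk ?_ trunc.continuous)
        · exact ContinuousEval.continuous_eval.comp
            (Continuous.prodMk (hγc.comp continuous_fst) continuous_snd)
        · exact (F.app ∅).continuous.comp (hxc.comp continuous_fst)⟩ with hzydF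
    set ηf : C(USphere j × I, Holim (F.tdiag.pull (TPunct.incl ι))) :=
      (Wel F).comp zydF with hηf
    -- the shrinking family towards the center of the disk
    have hshmem : ∀ p : USphere j × I,
        (1 - (p.2 : ℝ)) • p.1.1 ∈ closedBall (0 : EuclideanSpace ℝ (Fin (j+1))) 1 := by
      intro p
      rw [mem_closedBall_zero_iff, norm_smul, Real.norm_eq_abs,
        mem_sphere_zero_iff_norm.1 p.1.2, mul_one,
        abs_of_nonneg (by linarith [p.2.2.2])]
      linarith [p.2.2.1]
    set shrink : C(USphere j × I, UDisk j) :=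
      ⟨fun p => ⟨(1 - (p.2 : ℝ)) • p.1.1, hshmem p⟩, by
        apply Continuous.subtype_mk
        exact ((continuous_const.sub
          (continuous_subtype_val.comp continuous_snd)).smul
          (continuous_subtype_val.comp continuous_fst))⟩ with hshr
    set Pf : C(USphere j × I, Holim (F.tdiag.pull (TPunct.incl ι))) :=
      ((Wel F).comp Zd).comp shrink with hPf
    -- boundary of the disk of triples
    have hZdbd : ∀ ξ : USphere j,
        Zd ⟨ξ.1, sphere_subset_closedBall ξ.2⟩ = zydF (ξ, 1) := by
      intro ξ
      apply Subtype.ext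
      show (z, (ζhat _).1.1, (ζhat _).1.2) = _
      rw [hζhat ξ]
      refine Prod.ext ?_ (Prod.ext ?_ ?_)
      · show z = (φ ξ).1.2 1
        exact ((φ ξ).2.2).symm
      · rfl
      · show (pushF F).comp (φ ξ).1.2 = trunc (ξ, 1)
        ext s
        show pushF F ((φ ξ).1.2 s) = pushF F ((φ ξ).1.2 (cmI (((1 : I) : ℝ) * (s : ℝ))))
        rw [show ((1 : I) : ℝ) = 1 from rfl, one_mul, cmI_coe]
    have hmatch : ∀ ξ : USphere j, ηf (ξ, 1) = Pf (ξ, 0) := by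
      intro ξ
      show Wel F (zydF (ξ, 1)) = Wel F (Zd (shrink (ξ, 0)))
      rw [show shrink (ξ, 0) = ⟨ξ.1, sphere_subset_closedBall ξ.2⟩ from
        Subtype.ext (by
          show (1 - ((0 : I) : ℝ)) • ξ.1 = ξ.1
          rw [show ((0 : I) : ℝ) = 0 from rfl]
          norm_num), hZdbd ξ]
    set ηP : C((USphere j × I), Holim (F.tdiag.pull (TPunct.incl ι))) :=
      concatF ηf Pf hmatch with hηP
    -- the center point and the fixed total point
    set ctr : UDisk j := ⟨0, mem_closedBall_self zero_le_one⟩ with hctr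
    set w0 : Holim (F.tdiag.pull (TPunct.incl ι)) := Wel F (Zd ctr) with hw0
    -- the lifted sphere in the homotopy fiber of `aMapT`
    have hzyd0 : ∀ ξ : USphere j, zydF (ξ, 0) = constZYD F ((φ ξ).1.1) := by
      intro ξ
      apply Subtype.ext
      refine Prod.ext ?_ (Prod.ext rfl ?_)
      · exact (φ ξ).2.1
      · show trunc (ξ, 0) = ContinuousMap.const I (cubeAMap Y (F.app ∅ (φ ξ).1.1))
        ext s
        show pushF F ((φ ξ).1.2 (cmI (((0 : I) : ℝ) * (s : ℝ)))) = _
        rw [show ((0 : I) : ℝ) = 0 from rfl, zero_mul, cmI_zero, (φ ξ).2.1,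
          pushF_aMap]
        rfl
    have hφhatmem : ∀ ξ : USphere j,
        (ContinuousMap.curry ηP ξ) 0 = F.aMapT ((φ ξ).1.1) ∧
        (ContinuousMap.curry ηP ξ) 1 = w0 := by
      intro ξ
      constructor
      · show ηP (ξ, 0) = _
        rw [hηP, concatF_zero]
        show Wel F (zydF (ξ, 0)) = _
        rw [hzyd0 ξ, Wel_const]
      · show ηP (ξ, 1) = _
        rw [hηP, concatF_one]
        show Wel F (Zd (shrink (ξ, 1))) = _
        rw [show shrink (ξ, 1) = ctr from Subtype.ext (by
          show (1 - ((1 : I) : ℝ)) • ξ.1 = 0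
          rw [show ((1 : I) : ℝ) = 1 from rfl]
          norm_num)]
    set φhat : C(USphere j, HoFiber F.aMapT w0) :=
      ⟨fun ξ => ⟨((φ ξ).1.1, ContinuousMap.curry ηP ξ), hφhatmem ξ⟩, by
        apply Continuous.subtype_mk
        exact Continuous.prodMk hxc (ContinuousMap.curry ηP).continuous⟩ with hφh
    obtain ⟨Ψ, hΨ⟩ := (hF w0).2 j hj φhat
    -- projecting the filler disk down
    have hΘmem : ∀ d : UDisk j,
        ((resTP F).comp (Ψ d).1.2) 0 = cubeAMap X ((Ψ d).1.1) ∧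
        ((resTP F).comp (Ψ d).1.2) 1 = z := by
      intro d
      constructor
      · show resTP F ((Ψ d).1.2 0) = _
        rw [(Ψ d).2.1]
        exact res_aMapT F _
      · show resTP F ((Ψ d).1.2 1) = _
        rw [(Ψ d).2.2, hw0]
        exact res_Wel F _
    set Θ : C(UDisk j, HoFiber (cubeAMap X) z) :=
      ⟨fun d => ⟨((Ψ d).1.1, (resTP F).comp (Ψ d).1.2), hΘmem d⟩, by
        apply Continuous.subtype_mk
        refine Continuous.prodMk ?_ ?_
        · exact continuous_fst.comp (continuous_subtype_val.comp Ψ.continuous)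
        · exact (resTP F).continuous_postcomp.comp
            (continuous_snd.comp (continuous_subtype_val.comp Ψ.continuous))⟩
      with hΘ
    -- the reparametrization homotopy
    have hRepcont : Continuous fun q : (USphere j × I) × I =>
        (φ q.1.1).1.2 (cmI ((1 + (q.1.2 : ℝ)) * (q.2 : ℝ))) := by
      refine ContinuousEval.continuous_eval.comp (Continuous.prodMk ?_ ?_)
      · exact hγc.comp (continuous_fst.comp continuous_fst)
      · exact continuous_cmI.comp
          (((continuous_const.add (continuous_subtype_val.comp
            (continuous_snd.comp continuous_fst)))).mul
            (continuous_subtype_val.comp continuous_snd))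
    set Rep : C(USphere j × I, C(I, Holim (X.pull (NESet.incl ι)))) :=
      ContinuousMap.curry ⟨_, hRepcont⟩ with hRep
    have hHmem : ∀ p : USphere j × I,
        (Rep p) 0 = cubeAMap X ((φ p.1).1.1) ∧ (Rep p) 1 = z := by
      intro ⟨ξ, u⟩
      constructor
      · show (φ ξ).1.2 (cmI ((1 + (u : ℝ)) * ((0 : I) : ℝ))) = _
        rw [show ((0 : I) : ℝ) = 0 from rfl, mul_zero, cmI_zero]
        exact (φ ξ).2.1
      · show (φ ξ).1.2 (cmI ((1 + (u : ℝ)) * ((1 : I) : ℝ))) = _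
        rw [show ((1 : I) : ℝ) = 1 from rfl, mul_one, cmI_ge_one
          (by linarith [u.2.1]), (φ ξ).2.2]
    set H : C(USphere j × I, HoFiber (cubeAMap X) z) :=
      ⟨fun p => ⟨((φ p.1).1.1, Rep p), hHmem p⟩, by
        apply Continuous.subtype_mk
        exact Continuous.prodMk (hxc.comp continuous_fst) Rep.continuous⟩ with hH
    -- glue
    have hH0 : ∀ ξ : USphere j, H (ξ, 0) = φ ξ := by
      intro ξ
      apply Subtype.ext
      refine Prod.ext rfl ?_
      show Rep (ξ, 0) = (φ ξ).1.2
      ext s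
      show (φ ξ).1.2 (cmI ((1 + ((0 : I) : ℝ)) * (s : ℝ))) = (φ ξ).1.2 s
      rw [show ((0 : I) : ℝ) = 0 from rfl]
      rw [show (1 + (0 : ℝ)) * (s : ℝ) = (s : ℝ) by norm_num, cmI_coe]
    have hH1 : ∀ ξ : USphere j,
        H (ξ, 1) = Θ ⟨ξ.1, sphere_subset_closedBall ξ.2⟩ := by
      intro ξ
      apply Subtype.ext
      have hb := hΨ ξ
      refine Prod.ext ?_ ?_
      · show (φ ξ).1.1 = (Ψ ⟨ξ.1, sphere_subset_closedBall ξ.2⟩).1.1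
        rw [hb]
        rfl
      · show Rep (ξ, 1) = (resTP F).comp (Ψ ⟨ξ.1, sphere_subset_closedBall ξ.2⟩).1.2
        rw [hb]
        show Rep (ξ, 1) = (resTP F).comp (ContinuousMap.curry ηP ξ)
        ext s
        show (φ ξ).1.2 (cmI ((1 + ((1 : I) : ℝ)) * (s : ℝ)))
          = resTP F (ηP (ξ, s))
        rw [hηP]
        show _ = resTP F (if ((s : ℝ)) ≤ 1 / 2 then ηf (ξ, cmI (2 * s)) else
          Pf (ξ, cmI (2 * s - 1)))
        rw [show ((1 : I) : ℝ) = 1 from rfl, show (1 + (1:ℝ)) = 2 by norm_num]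
        split
        · show (φ ξ).1.2 (cmI (2 * (s:ℝ))) = resTP F (Wel F (zydF (ξ, cmI (2 * s))))
          rw [res_Wel]
          rfl
        · show (φ ξ).1.2 (cmI (2 * (s:ℝ)))
            = resTP F (Wel F (Zd (shrink (ξ, cmI (2 * s - 1)))))
          rw [res_Wel]
          show (φ ξ).1.2 (cmI (2 * (s:ℝ))) = z
          rw [cmI_ge_one (by linarith [le_of_not_ge ‹¬((s : ℝ)) ≤ 1 / 2›])]
          exact (φ ξ).2.2
    exact glue_extension φ Θ H hH1 hH0

end Chunk9

/-- if `Y` is `k`-cartesian and the `(r+1)`-cube `X → Y` is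
`k`-cartesian, then `X` is `k`-cartesian. -/
theorem cartesian_of_cubeMap_isCartesian {ι : Type} (k : ℤ) {X Y : PCube ι}
    (F : CubeMap X Y) (hY : IsCartesianC k Y) (hF : F.IsCartesian k) :
    IsCartesianC k X :=
  main_cartesian k F hY hF
end
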